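/- arXiv:2510.18792 — 6 statements merged into one kernel-verified Lean document; each statement's English description precedes it below -/
import Mathlib

section
/- Let 0 < p < 1/2 and let (X_t) be the p-biased nearest-neighbor random walk on ℤ started at n ∈ ℤ (steps are i.i.d., equal to −1 with probability p and +1 with probability 1−p). Let τ = inf{t ≥ 1 : X_t = n−1} be the first hitting time of n−1. Then for every integer m ≥ 1, the conditional probability P(τ ≥ 2m+1 | τ < ∞) is at most exp(−3(1−2p)² m / (2(1+4p))). -/
open MeasureTheory ProbabilityTheory


open List DyckStep

namespace Stmt0Aux

def dval : DyckStep → ℤ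
  | U => 1
  | D => -1

def wsum (l : List DyckStep) : ℤ := (l.map dval).sum

@[simp] lemma wsum_nil : wsum [] = 0 := rfl
@[simp] lemma wsum_append (l₁ l₂ : List DyckStep) :
    wsum (l₁ ++ l₂) = wsum l₁ + wsum l₂ := by simp [wsum]
@[simp] lemma wsum_cons (a : DyckStep) (l : List DyckStep) :
    wsum (a :: l) = dval a + wsum l := by simp [wsum]

lemma dval_eq_or (a : DyckStep) : dval a = 1 ∨ dval a = -1 := by cases a <;> simp [dval]

lemma wsum_eq_counts (l : List DyckStep) : wsum l = (l.count U : ℤ) - l.count D := by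
  induction l with
  | nil => simp
  | cons a t ih => cases a <;> simp [ih, dval, count_cons] <;> ring

lemma count_add_count (l : List DyckStep) : l.count U + l.count D = l.length := by
  induction l with
  | nil => simp
  | cons a t ih => cases a <;> simp [count_cons] <;> omega

lemma wsum_take_succ (l : List DyckStep) (t : ℕ) (h : t < l.length) :
    wsum (l.take (t+1)) = wsum (l.take t) + dval l[t] := by
  have h' : t < (l.map dval).length := by simpa using h
  have h2 := List.sum_take_succ (l.map dval) t h'
  simpa [wsum, List.map_take] using h2

lemma wsum_take_nonneg (l : List DyckStep)
    (h : ∀ i, 1 ≤ i → i < l.length → wsum (l.take i) ≠ -1) :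
    ∀ t, t < l.length → 0 ≤ wsum (l.take t) := by
  intro t
  induction t with
  | zero => intro _; simp
  | succ s ih =>
    intro hlt
    have hs : s < l.length := by omega
    have h0 : 0 ≤ wsum (l.take s) := ih (by omega)
    have hstep := wsum_take_succ l s hs
    have hne := h (s+1) (by omega) (by omega)
    rw [hstep] at hne ⊢
    rcases dval_eq_or l[s] with h1 | h1 <;> omega


instance : Fintype DyckStep :=
  ⟨{U, D}, fun s => by cases s <;> simp⟩

open scoped Classical in
/-- First-passage sign sequences of length `T`. -/
noncomputable def FP (T : ℕ) : Finset (Fin T → DyckStep) :=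
  Finset.univ.filter (fun b => wsum (List.ofFn b) = -1 ∧
    ∀ t, 1 ≤ t → t < T → wsum ((List.ofFn b).take t) ≠ -1)

lemma mem_FP {T : ℕ} (b : Fin T → DyckStep) :
    b ∈ FP T ↔ wsum (List.ofFn b) = -1 ∧
      ∀ t, 1 ≤ t → t < T → wsum ((List.ofFn b).take t) ≠ -1 := by
  classical
  simp [FP]

lemma FP_even (k : ℕ) : FP (2*k) = ∅ := by
  ext b
  simp only [mem_FP, Finset.notMem_empty, iff_false, not_and]
  intro hsum
  exfalso
  have h1 := wsum_eq_counts (List.ofFn b)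
  have h2 := count_add_count (List.ofFn b)
  rw [List.length_ofFn] at h2
  omega

lemma counts_of_mem_FP {k : ℕ} (b : Fin (2*k+1) → DyckStep) (hb : b ∈ FP (2*k+1)) :
    (List.ofFn b).count U = k ∧ (List.ofFn b).count D = k + 1 := by
  rw [mem_FP] at hb
  have h1 := wsum_eq_counts (List.ofFn b)
  have h2 := count_add_count (List.ofFn b)
  rw [List.length_ofFn] at h2
  omega

end Stmt0Aux

namespace Stmt0Aux
open DyckWord

section Bij
variable {k : ℕ}

lemma length_ofFn' (b : Fin (2*k+1) → DyckStep) : (List.ofFn b).length = 2*k+1 := by simp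

lemma fp_facts (b : Fin (2*k+1) → DyckStep) (hb : b ∈ FP (2*k+1)) :
    (∀ t, t ≤ 2*k → 0 ≤ wsum ((List.ofFn b).take t)) ∧
    wsum ((List.ofFn b).take (2*k)) = 0 ∧
    (List.ofFn b)[2*k]'(by simp) = D := by
  rw [mem_FP] at hb
  obtain ⟨hfull, hne⟩ := hb
  have hlen := length_ofFn' b
  have hnn : ∀ t, t ≤ 2*k → 0 ≤ wsum ((List.ofFn b).take t) := by
    intro t ht
    refine wsum_take_nonneg _ ?_ t (by omega)
    intro i h1 h2
    exact hne i h1 (by omega)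
  have hsp : wsum ((List.ofFn b).take (2*k+1)) =
      wsum ((List.ofFn b).take (2*k)) + dval ((List.ofFn b)[2*k]'(by simp)) :=
    wsum_take_succ _ _ (by omega)
  rw [List.take_of_length_le (by omega), hfull] at hsp
  have h2k := hnn (2*k) le_rfl
  have hd := dval_eq_or ((List.ofFn b)[2*k]'(by simp))
  refine ⟨hnn, by omega, ?_⟩
  have : dval ((List.ofFn b)[2*k]'(by simp)) = -1 := by omega
  cases h : (List.ofFn b)[2*k]'(by simp) <;> rw [h] at this <;> simp [dval] at this ⊢

/-- The Dyck word obtained from a first-passage sequence by dropping the final `D`. -/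
def toDyck (b : Fin (2*k+1) → DyckStep) (hb : b ∈ FP (2*k+1)) : DyckWord where
  toList := (List.ofFn b).take (2*k)
  count_U_eq_count_D := by
    have h0 := (fp_facts b hb).2.1
    have := wsum_eq_counts ((List.ofFn b).take (2*k))
    omega
  count_D_le_count_U := by
    intro i
    have hnn := (fp_facts b hb).1 (min i (2*k)) (by omega)
    rw [List.take_take] at *
    have := wsum_eq_counts ((List.ofFn b).take (min i (2*k)))
    omega

lemma toDyck_semilength (b : Fin (2*k+1) → DyckStep) (hb : b ∈ FP (2*k+1)) :
    (toDyck b hb).semilength = k := by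
  have h1 : (toDyck b hb).toList.length = 2*k := by
    simp [toDyck]
  have := (toDyck b hb).two_mul_semilength_eq_length
  omega

/-- Inverse: append a `D` to a Dyck word. -/
def ofDyck (d : DyckWord) : Fin (2*k+1) → DyckStep := fun i => (d.toList ++ [D]).getD i D

lemma ofFn_ofDyck (d : DyckWord) (hd : d.semilength = k) :
    List.ofFn (ofDyck (k := k) d) = d.toList ++ [D] := by
  have hlen : d.toList.length = 2*k := by rw [← d.two_mul_semilength_eq_length, hd]
  apply List.ext_getElem (by simp [hlen])
  intro i h1 h2
  rw [List.getElem_ofFn]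
  show (d.toList ++ [D]).getD i D = _
  exact List.getD_eq_getElem _ _ h2

lemma ofDyck_mem_FP (d : DyckWord) (hd : d.semilength = k) :
    ofDyck (k := k) d ∈ FP (2*k+1) := by
  have hlen : d.toList.length = 2*k := by rw [← d.two_mul_semilength_eq_length, hd]
  rw [mem_FP, ofFn_ofDyck d hd]
  constructor
  · have h1 := d.count_U_eq_count_D
    have h2 := wsum_eq_counts d.toList
    have : wsum (d.toList ++ [D]) = wsum d.toList + dval D := by simp
    rw [this, h2, h1]
    simp [dval]
  · intro t h1 h2
    have ht : t ≤ d.toList.length := by omega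
    rw [List.take_append_of_le_length ht]
    have hc := d.count_D_le_count_U t
    have := wsum_eq_counts (d.toList.take t)
    omega

lemma ofDyck_toDyck (b : Fin (2*k+1) → DyckStep) (hb : b ∈ FP (2*k+1)) :
    ofDyck (k := k) (toDyck b hb) = b := by
  have hlast := (fp_facts b hb).2.2
  have hdrop : (List.ofFn b).drop (2*k) = [D] := by
    rw [List.drop_eq_getElem_cons (by simp : 2*k < (List.ofFn b).length), hlast,
      List.drop_of_length_le (by simp)]
  have hsplit : (List.ofFn b).take (2*k) ++ [D] = List.ofFn b := by
    conv_rhs => rw [← List.take_append_drop (2*k) (List.ofFn b), hdrop]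
  funext i
  show ((toDyck b hb).toList ++ [D]).getD i D = b i
  rw [show (toDyck b hb).toList = (List.ofFn b).take (2*k) from rfl, hsplit]
  rw [List.getD_eq_getElem _ _ (by simp [i.isLt]), List.getElem_ofFn]

lemma toDyck_ofDyck (d : DyckWord) (hd : d.semilength = k) :
    toDyck (ofDyck (k := k) d) (ofDyck_mem_FP d hd) = d := by
  have hlen : d.toList.length = 2*k := by rw [← d.two_mul_semilength_eq_length, hd]
  apply DyckWord.ext
  show (List.ofFn (ofDyck (k := k) d)).take (2*k) = d.toList
  rw [ofFn_ofDyck d hd, List.take_append_of_le_length (by omega),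
    List.take_of_length_le (by omega)]

lemma FP_card (k : ℕ) : (FP (2*k+1)).card = catalan k := by
  classical
  rw [← DyckWord.card_dyckWord_semilength_eq_catalan, ← Fintype.card_coe]
  refine Fintype.card_congr ?_
  exact {
    toFun := fun x => ⟨toDyck x.1 x.2, toDyck_semilength x.1 x.2⟩
    invFun := fun x => ⟨ofDyck (k := k) x.1, ofDyck_mem_FP x.1 x.2⟩
    left_inv := fun x => Subtype.ext (ofDyck_toDyck x.1 x.2)
    right_inv := fun x => Subtype.ext (toDyck_ofDyck x.1 x.2) }

end Bij
end Stmt0Aux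

namespace Stmt0Aux

lemma catalan_succ_le (k : ℕ) : catalan (k+1) ≤ 4 * catalan k := by
  have h1 : (k+1+1) * catalan (k+1) = (k+1).centralBinom := succ_mul_catalan_eq_centralBinom (k+1)
  have h2 : (k+1) * Nat.centralBinom (k+1) = 2 * (2*k+1) * Nat.centralBinom k :=
    Nat.succ_mul_centralBinom_succ k
  have h3 : (k+1) * catalan k = Nat.centralBinom k := succ_mul_catalan_eq_centralBinom k
  have key : (k+1) * ((k+2) * catalan (k+1)) = (k+1) * (2*(2*k+1) * catalan k) := by
    calc (k+1) * ((k+2) * catalan (k+1)) = (k+1) * Nat.centralBinom (k+1) := by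
          rw [← h1]
      _ = 2*(2*k+1) * ((k+1) * catalan k) := by rw [h2, ← h3]
      _ = (k+1) * (2*(2*k+1) * catalan k) := by ring
  have key2 : (k+2) * catalan (k+1) = 2*(2*k+1) * catalan k :=
    Nat.eq_of_mul_eq_mul_left (by omega) key
  have : (k+2) * catalan (k+1) ≤ (k+2) * (4 * catalan k) := by
    rw [key2]
    have : 2*(2*k+1) ≤ (k+2) * 4 := by omega
    calc 2*(2*k+1) * catalan k ≤ ((k+2) * 4) * catalan k :=
      Nat.mul_le_mul_right _ this
      _ = (k+2) * (4 * catalan k) := by ring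
  exact Nat.le_of_mul_le_mul_left this (by omega)

lemma catalan_add_le (m k : ℕ) : catalan (k + m) ≤ 4 ^ m * catalan k := by
  induction m with
  | zero => simp
  | succ j ih =>
    have := catalan_succ_le (k + j)
    calc catalan (k + (j+1)) = catalan ((k+j)+1) := by ring_nf
      _ ≤ 4 * catalan (k+j) := catalan_succ_le _
      _ ≤ 4 * (4^j * catalan k) := Nat.mul_le_mul_left _ ih
      _ = 4^(j+1) * catalan k := by ring

end Stmt0Aux

namespace Stmt0Aux
open scoped ENNReal

lemma sum_range_eq_wsum_take {T : ℕ} (b : Fin T → DyckStep) (c : ℕ → ℤ)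
    (hc : ∀ i : Fin T, c i = dval (b i)) :
    ∀ t, t ≤ T → ∑ i ∈ Finset.range t, c i = wsum ((List.ofFn b).take t) := by
  intro t
  induction t with
  | zero => intro _; simp
  | succ s ih =>
    intro hs
    have hlt : s < (List.ofFn b).length := by simp; omega
    rw [Finset.sum_range_succ, ih (by omega), wsum_take_succ _ _ hlt,
      List.getElem_ofFn]
    exact congrArg _ (hc ⟨s, by omega⟩)

lemma dval_injective : Function.Injective dval := by
  intro a b h
  cases a <;> cases b <;> simp [dval] at h ⊢

lemma prod_w (P Q : ℝ≥0∞) :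
    ∀ l : List DyckStep,
      (l.map (fun s => if s = U then Q else P)).prod = P ^ (l.count D) * Q ^ (l.count U) := by
  intro l
  induction l with
  | nil => simp
  | cons a t ih =>
    cases a <;> simp [ih, List.count_cons, pow_succ] <;> ring

lemma prod_fin_w {T : ℕ} (P Q : ℝ≥0∞) (b : Fin T → DyckStep) :
    (∏ i : Fin T, (if b i = U then Q else P)) =
      P ^ ((List.ofFn b).count D) * Q ^ ((List.ofFn b).count U) := by
  rw [← prod_w P Q (List.ofFn b), List.map_ofFn, List.prod_ofFn]
  rfl

end Stmt0Aux

namespace Stmt0Aux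

lemma poly_ineq (p : ℝ) (hp0 : 0 < p) (hp1 : p < 1/2) :
    4*p*(1-p) * (8*(1+4*p))^4 ≤ (8*(1+4*p) - 3*(1-2*p)^2)^4 := by
  nlinarith [sq_nonneg (1-2*p), sq_nonneg p, sq_nonneg ((1-2*p)^2),
    mul_pos hp0 (by linarith : (0:ℝ) < 1 - 2*p),
    sq_nonneg ((1-2*p)*(3-4*(1-2*p))), sq_nonneg ((1-2*p)^2*(3-4*(1-2*p)))]

lemma base_exp_ineq (p : ℝ) (hp0 : 0 < p) (hp1 : p < 1/2) :
    4*p*(1-p) ≤ Real.exp (-(3*(1-2*p)^2) / (2*(1+4*p))) := by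
  have hd : (0:ℝ) < 1+4*p := by linarith
  set c : ℝ := 3*(1-2*p)^2 / (2*(1+4*p)) with hc
  have hceq : -(3*(1-2*p)^2) / (2*(1+4*p)) = -c := by rw [hc]; ring
  rw [hceq]
  have hc32 : c ≤ 3/2 := by
    rw [hc, div_le_iff₀ (by linarith)]
    nlinarith [sq_nonneg (1-2*p), sq_nonneg p]
  have hc0 : 0 ≤ c := by positivity
  have h4 : Real.exp (-(c/4)) ^ 4 = Real.exp (-c) := by
    rw [← Real.exp_nat_mul]
    norm_num
    ring_nf
  have hlin : 1 - c/4 ≤ Real.exp (-(c/4)) := by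
    have := Real.add_one_le_exp (-(c/4)); linarith
  have hnn : (0:ℝ) ≤ 1 - c/4 := by linarith
  have hpow : (1 - c/4)^4 ≤ Real.exp (-c) := by
    rw [← h4]; exact pow_le_pow_left₀ hnn hlin 4
  refine le_trans ?_ hpow
  have hrw : 1 - c/4 = (8*(1+4*p) - 3*(1-2*p)^2) / (8*(1+4*p)) := by
    rw [hc]; field_simp; ring
  rw [hrw, div_pow, le_div_iff₀ (by positivity)]
  exact poly_ineq p hp0 hp1

end Stmt0Aux
open List DyckStep Stmt0Aux
open scoped ENNReal

set_option maxHeartbeats 1000000 in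
/-- For the `p`-biased nearest-neighbor random walk on `ℤ` started at `n`
(with `0 < p < 1/2`), letting `τ = inf {t ≥ 1 : X t = n - 1}`, for every integer `m ≥ 1`
the conditional probability `P(τ ≥ 2m+1 ∣ τ < ∞)` is at most
`exp(−3(1−2p)² m / (2(1+4p)))`.  The event `{τ ≥ 2m+1}` is expressed as the walk not
hitting `n - 1` at any time `1 ≤ t ≤ 2m`, and `{τ < ∞}` as the walk hitting `n - 1` at
some time `t ≥ 1`. -/
theorem stmt0
    {Ω : Type*} [MeasurableSpace Ω] (μ : Measure Ω) [IsProbabilityMeasure μ]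
    (p : ℝ) (hp0 : 0 < p) (hp1 : p < 1 / 2)
    (ξ : ℕ → Ω → ℤ)
    (hmeas : ∀ i, Measurable (ξ i))
    (hindep : iIndepFun ξ μ)
    (hneg : ∀ i, μ {ω | ξ i ω = -1} = ENNReal.ofReal p)
    (hpos : ∀ i, μ {ω | ξ i ω = 1} = ENNReal.ofReal (1 - p))
    (n : ℤ)
    (X : ℕ → Ω → ℤ)
    (hX : ∀ t ω, X t ω = n + ∑ i ∈ Finset.range t, ξ i ω)
    (m : ℕ) (hm : 1 ≤ m) :
    μ[|{ω | ∃ t, 1 ≤ t ∧ X t ω = n - 1}]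
        {ω | ∀ t, 1 ≤ t → t ≤ 2 * m → X t ω ≠ n - 1}
      ≤ ENNReal.ofReal (Real.exp (-(3 * (1 - 2 * p) ^ 2 * m) / (2 * (1 + 4 * p)))) := by
  classical
  set P := ENNReal.ofReal p with hP
  set Q := ENNReal.ofReal (1 - p) with hQ
  set A : Set Ω := {ω | ∃ t, 1 ≤ t ∧ X t ω = n - 1} with hA
  set B : Set Ω := {ω | ∀ t, 1 ≤ t → t ≤ 2 * m → X t ω ≠ n - 1} with hB
  have hXmeas : ∀ t, Measurable (X t) := by
    intro t
    have : X t = fun ω => n + ∑ i ∈ Finset.range t, ξ i ω := funext (hX t)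
    rw [this]
    exact measurable_const.add (Finset.measurable_sum _ fun i _ => hmeas i)
  set E : ℕ → Set Ω :=
    fun T => {ω | X T ω = n - 1 ∧ ∀ t, 1 ≤ t → t < T → X t ω ≠ n - 1} with hE
  have hEmeas : ∀ T, MeasurableSet (E T) := by
    intro T
    have : E T = (X T ⁻¹' {n - 1}) ∩
        ⋂ (t : ℕ), ⋂ (_ : 1 ≤ t ∧ t < T), (X t ⁻¹' {n - 1})ᶜ := by
      ext ω
      simp only [hE, Set.mem_setOf_eq, Set.mem_inter_iff, Set.mem_preimage,
        Set.mem_singleton_iff, Set.mem_iInter, Set.mem_compl_iff]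
      tauto
    rw [this]
    exact ((hXmeas T) (measurableSet_singleton _)).inter
      (MeasurableSet.iInter fun t => MeasurableSet.iInter fun _ =>
        ((hXmeas t) (measurableSet_singleton _)).compl)
  -- atoms
  set Atom : (T : ℕ) → (Fin T → DyckStep) → Set Ω :=
    fun T b => {ω | ∀ i : Fin T, ξ i ω = dval (b i)} with hAtom
  have hfactor : ∀ (i : ℕ) (s : DyckStep),
      μ ((ξ i) ⁻¹' {dval s}) = (if s = U then Q else P) := by
    intro i s
    cases s
    · have : (ξ i) ⁻¹' {dval U} = {ω | ξ i ω = 1} := by ext ω; simp [dval]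
      rw [this, hpos i]; simp
    · have : (ξ i) ⁻¹' {dval D} = {ω | ξ i ω = -1} := by ext ω; simp [dval]
      rw [this, hneg i]; simp
  have hAtomμ : ∀ (T : ℕ) (b : Fin T → DyckStep),
      μ (Atom T b) = ∏ i : Fin T, (if b i = U then Q else P) := by
    intro T b
    set bext : ℕ → DyckStep := fun i => if h : i < T then b ⟨i, h⟩ else U with hbext
    have hset : Atom T b = ⋂ i ∈ Finset.range T, (ξ i) ⁻¹' {dval (bext i)} := by
      ext ω
      simp only [hAtom, Set.mem_setOf_eq, Set.mem_iInter, Finset.mem_range,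
        Set.mem_preimage, Set.mem_singleton_iff, hbext]
      constructor
      · intro h i hi
        rw [dif_pos hi]
        exact h ⟨i, hi⟩
      · intro h i
        have := h i.1 i.2
        rwa [dif_pos i.2] at this
    rw [hset, hindep.measure_inter_preimage_eq_mul (Finset.range T)
      (fun i _ => measurableSet_singleton _)]
    rw [← Fin.prod_univ_eq_prod_range (fun i => μ ((ξ i) ⁻¹' {dval (bext i)})) T]
    refine Finset.prod_congr rfl fun i _ => ?_
    rw [hfactor]
    congr 1
    simp [hbext, i.isLt]
  -- E T as union of atoms
  have hEμ : ∀ T, μ (E T) = ∑ b ∈ FP T, μ (Atom T b) := by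
    intro T
    -- the full-measure set where the first T steps are ±1
    set G : Set Ω := ⋃ i ∈ Finset.range T, ({ω | ξ i ω = -1} ∪ {ω | ξ i ω = 1})ᶜ with hG
    have hGmeas : MeasurableSet G := by
      refine MeasurableSet.biUnion (Finset.range T).countable_toSet fun i _ => ?_
      exact (((hmeas i) (measurableSet_singleton (-1))).union
        ((hmeas i) (measurableSet_singleton 1))).compl
    have hms1 : ∀ (i : ℕ) (v : ℤ), MeasurableSet {ω | ξ i ω = v} := by
      intro i v
      have : {ω | ξ i ω = v} = ξ i ⁻¹' {v} := by ext ω; simp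
      rw [this]
      exact (hmeas i) (measurableSet_singleton _)
    have hGnull : μ G = 0 := by
      refine measure_biUnion_null_iff (Finset.range T).countable_toSet |>.mpr fun i _ => ?_
      have hdis : Disjoint {ω | ξ i ω = -1} {ω | ξ i ω = 1} := by
        rw [Set.disjoint_left]
        intro ω h1 h2
        simp only [Set.mem_setOf_eq] at h1 h2
        omega
      have hu : μ ({ω | ξ i ω = -1} ∪ {ω | ξ i ω = 1}) = 1 := by
        rw [measure_union hdis (hms1 i 1), hneg i, hpos i,
          ← ENNReal.ofReal_add hp0.le (by linarith)]
        norm_num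
      have := measure_compl ((hms1 i (-1)).union (hms1 i 1)) (measure_ne_top μ _)
      rw [hu, measure_univ] at this
      simpa using this
    have hEG : μ (E T) = μ (E T ∩ Gᶜ) := by
      have h1 : μ (E T) ≤ μ (E T ∩ Gᶜ) + μ G := by
        refine le_trans (measure_mono ?_) (measure_union_le _ _)
        intro ω hω
        by_cases hωG : ω ∈ G
        · exact Or.inr hωG
        · exact Or.inl ⟨hω, hωG⟩
      have h2 : μ (E T ∩ Gᶜ) ≤ μ (E T) := measure_mono Set.inter_subset_left
      rw [hGnull, add_zero] at h1
      exact le_antisymm h1 h2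
    have hdecomp : E T ∩ Gᶜ = ⋃ b ∈ FP T, Atom T b := by
      ext ω
      simp only [Set.mem_inter_iff, Set.mem_iUnion, exists_prop]
      constructor
      · rintro ⟨hωE, hωG⟩
        have hsign : ∀ i, i < T → ξ i ω = -1 ∨ ξ i ω = 1 := by
          intro i hi
          by_contra hcon
          push_neg at hcon
          refine hωG (Set.mem_iUnion₂.mpr ⟨i, Finset.mem_range.mpr hi, ?_⟩)
          simp only [Set.mem_compl_iff, Set.mem_union, Set.mem_setOf_eq]
          tauto
        refine ⟨fun i => if ξ i ω = 1 then U else D, ?_⟩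
        set b : Fin T → DyckStep := fun i => if ξ i ω = 1 then U else D with hb
        have hbv : ∀ i : Fin T, ξ i ω = dval (b i) := by
          intro i
          rw [hb]
          rcases hsign i i.2 with h | h <;> simp [h, dval]
        have hXw : ∀ t, t ≤ T → X t ω = n + wsum ((List.ofFn b).take t) := by
          intro t ht
          rw [hX t ω, sum_range_eq_wsum_take b (fun i => ξ i ω) hbv t ht]
        refine ⟨?_, hbv⟩
        rw [mem_FP]
        obtain ⟨hXT, hXlt⟩ := hωE
        constructor
        · have := hXw T le_rfl
          rw [List.take_of_length_le (by simp)] at this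
          rw [this] at hXT
          omega
        · intro t h1t htT
          have := hXw t (by omega)
          have hne := hXlt t h1t htT
          rw [this] at hne
          omega
      · rintro ⟨b, hbFP, hων⟩
        have hXw : ∀ t, t ≤ T → X t ω = n + wsum ((List.ofFn b).take t) := by
          intro t ht
          rw [hX t ω, sum_range_eq_wsum_take b (fun i => ξ i ω) hων t ht]
        rw [mem_FP] at hbFP
        obtain ⟨hsum, hpre⟩ := hbFP
        refine ⟨⟨?_, ?_⟩, ?_⟩
        · have := hXw T le_rfl
          rw [List.take_of_length_le (by simp), hsum] at this
          omega
        · intro t h1t htT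
          have := hXw t (by omega)
          have hne := hpre t h1t htT
          omega
        · show ω ∉ G
          intro hcon
          rcases Set.mem_iUnion₂.mp hcon with ⟨i, hi, hmem⟩
          apply hmem
          have hi' : i < T := Finset.mem_range.mp hi
          have this : ξ i ω = dval (b ⟨i, hi'⟩) := hων ⟨i, hi'⟩
          rcases dval_eq_or (b ⟨i, hi'⟩) with h | h <;> rw [h] at this <;>
            simp only [Set.mem_union, Set.mem_setOf_eq] <;> omega
    rw [hEG, hdecomp]
    rw [measure_biUnion_finset ?hd fun b _ => ?hm2]
    case hd =>
      intro b hb b' hb' hne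
      rw [Function.onFun, Set.disjoint_left]
      intro ω hω hω'
      apply hne
      funext i
      exact dval_injective ((hω i).symm.trans (hω' i))
    case hm2 =>
      have : Atom T b = ⋂ i : Fin T, (ξ i) ⁻¹' {dval (b i)} := by
        ext ω; simp [hAtom]
      rw [this]
      exact MeasurableSet.iInter fun i => (hmeas i) (measurableSet_singleton _)
  
  -- measure values per length
  have hodd : ∀ k : ℕ, μ (E (2*k+1)) = (catalan k : ℝ≥0∞) * (P ^ (k+1) * Q ^ k) := by
    intro k
    rw [hEμ]
    have hterm : ∀ b ∈ FP (2*k+1), μ (Atom (2*k+1) b) = P ^ (k+1) * Q ^ k := by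
      intro b hb
      rw [hAtomμ, prod_fin_w P Q b, (counts_of_mem_FP b hb).1, (counts_of_mem_FP b hb).2]
    rw [Finset.sum_congr rfl hterm, Finset.sum_const, FP_card k, nsmul_eq_mul]
  have heven : ∀ k : ℕ, μ (E (2*k)) = 0 := by
    intro k
    rw [hEμ, FP_even k]
    simp
  -- basic structure of A and A ∩ B
  have hE0 : E 0 = ∅ := by
    ext ω
    simp only [hE, Set.mem_setOf_eq, Set.mem_empty_iff_false, iff_false, not_and]
    intro hX0
    rw [hX 0 ω] at hX0
    simp at hX0
    omega
  have hEdisj' : ∀ i j : ℕ, i < j → ∀ ω, ω ∈ E i → ω ∈ E j → False := by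
    intro i j hij ω hi hj
    rcases Nat.eq_zero_or_pos i with h0 | h0
    · rw [h0, hE0] at hi
      exact hi
    · exact hj.2 i h0 hij hi.1
  have hEdisj : Pairwise (Function.onFun _root_.Disjoint E) := by
    intro i j hne
    rw [Function.onFun, Set.disjoint_left]
    intro ω hi hj
    rcases lt_or_gt_of_ne hne with h | h
    · exact hEdisj' i j h ω hi hj
    · exact hEdisj' j i h ω hj hi
  have hA_eq : A = ⋃ T, E T := by
    ext ω
    simp only [hA, Set.mem_setOf_eq, Set.mem_iUnion]
    constructor
    · rintro ⟨t, h1, h2⟩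
      have hex : ∃ t, 1 ≤ t ∧ X t ω = n - 1 := ⟨t, h1, h2⟩
      refine ⟨Nat.find hex, (Nat.find_spec hex).2, ?_⟩
      intro s hs1 hs2 heq
      exact Nat.find_min hex hs2 ⟨hs1, heq⟩
    · rintro ⟨T, hT⟩
      rcases Nat.eq_zero_or_pos T with h0 | h0
      · rw [h0, hE0] at hT
        exact absurd hT (Set.notMem_empty ω)
      · exact ⟨T, h0, hT.1⟩
  have hAB_eq : A ∩ B = ⋃ T, E (T + (2*m+1)) := by
    ext ω
    simp only [Set.mem_inter_iff, hA, hB, Set.mem_setOf_eq, Set.mem_iUnion]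
    constructor
    · rintro ⟨⟨t, h1, h2⟩, hBω⟩
      have hex : ∃ t, 1 ≤ t ∧ X t ω = n - 1 := ⟨t, h1, h2⟩
      set T := Nat.find hex with hTdef
      have hspec := Nat.find_spec hex
      have hmem : ω ∈ E T := by
        refine ⟨hspec.2, fun s hs1 hs2 heq => Nat.find_min hex hs2 ⟨hs1, heq⟩⟩
      have hTbig : 2*m+1 ≤ T := by
        by_contra hcon
        push_neg at hcon
        exact hBω T hspec.1 (by omega) hspec.2
      refine ⟨T - (2*m+1), ?_⟩
      have : T - (2*m+1) + (2*m+1) = T := by omega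
      rw [this]
      exact hmem
    · rintro ⟨T, hT⟩
      refine ⟨⟨T + (2*m+1), by omega, hT.1⟩, ?_⟩
      intro t ht1 ht2 heq
      exact hT.2 t ht1 (by omega) heq
  -- summing up
  have hμA : μ A = ∑' T, μ (E T) := by
    rw [hA_eq]
    exact measure_iUnion hEdisj hEmeas
  have hμAB : μ (A ∩ B) = ∑' T, μ (E (T + (2*m+1))) := by
    rw [hAB_eq]
    refine measure_iUnion ?_ (fun T => hEmeas _)
    intro i j hne
    exact hEdisj (show i + (2*m+1) ≠ j + (2*m+1) by omega)
  set C : ℝ≥0∞ := 4 * (P * Q) with hC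
  have hterm : ∀ T, μ (E (T + (2*m+1))) ≤ C^m * μ (E (T+1)) := by
    intro T
    rcases Nat.even_or_odd T with ⟨k, hk⟩ | ⟨k, hk⟩
    · have e1 : T + (2*m+1) = 2*(k+m)+1 := by omega
      have e2 : T + 1 = 2*k+1 := by omega
      rw [e1, e2, hodd (k+m), hodd k]
      have hcat : (catalan (k+m) : ℝ≥0∞) ≤ (4:ℝ≥0∞)^m * (catalan k : ℝ≥0∞) := by
        have := catalan_add_le m k
        have h2 : ((catalan (k+m) : ℕ) : ℝ≥0∞) ≤ ((4^m * catalan k : ℕ) : ℝ≥0∞) := by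
          exact_mod_cast this
        rw [Nat.cast_mul, Nat.cast_pow] at h2
        exact_mod_cast h2
      calc (catalan (k+m) : ℝ≥0∞) * (P ^ (k+m+1) * Q ^ (k+m))
          ≤ ((4:ℝ≥0∞)^m * (catalan k : ℝ≥0∞)) * (P ^ (k+m+1) * Q ^ (k+m)) :=
            mul_le_mul_left hcat _
        _ = C^m * ((catalan k : ℝ≥0∞) * (P ^ (k+1) * Q ^ k)) := by
            rw [hC, mul_pow, mul_pow, pow_add, pow_add, pow_succ, pow_succ]
            ring
    · have e1 : T + (2*m+1) = 2*(k+m+1) := by omega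
      rw [e1, heven]
      exact zero_le
  have hsumle : μ (A ∩ B) ≤ C^m * μ A := by
    rw [hμAB, hμA]
    calc ∑' T, μ (E (T + (2*m+1))) ≤ ∑' T, C^m * μ (E (T+1)) :=
          ENNReal.tsum_le_tsum hterm
      _ = C^m * ∑' T, μ (E (T+1)) := by rw [ENNReal.tsum_mul_left]
      _ ≤ C^m * ∑' T, μ (E T) := by
          refine mul_le_mul_right ?_ _
          exact ENNReal.tsum_comp_le_tsum_of_injective
            (f := fun T : ℕ => T + 1) (fun a b h => by simpa using h) (fun T => μ (E T))
  -- conclusion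
  have hAmeas : MeasurableSet A := by
    rw [hA_eq]
    exact MeasurableSet.iUnion hEmeas
  have hμA0 : μ A ≠ 0 := by
    have hsub : E 1 ⊆ A := by
      rw [hA_eq]
      exact Set.subset_iUnion E 1
    have h1 : μ (E 1) = P := by
      have := hodd 0
      norm_num at this
      exact this
    have hp' : 0 < μ (E 1) := by
      rw [h1, hP]
      exact ENNReal.ofReal_pos.mpr hp0
    exact (lt_of_lt_of_le hp' (measure_mono hsub)).ne'
  have hμAtop : μ A ≠ ⊤ := measure_ne_top μ A
  have hcond : μ[|A] B = (μ A)⁻¹ * μ (A ∩ B) := cond_apply hAmeas μ B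
  rw [hcond]
  have hfinal : (μ A)⁻¹ * μ (A ∩ B) ≤ C^m := by
    calc (μ A)⁻¹ * μ (A ∩ B) ≤ (μ A)⁻¹ * (C^m * μ A) := mul_le_mul_right hsumle _
      _ = C^m * ((μ A)⁻¹ * μ A) := by ring
      _ = C^m := by rw [ENNReal.inv_mul_cancel hμA0 hμAtop, mul_one]
  refine le_trans hfinal ?_
  -- numerical bound
  have hCval : C = ENNReal.ofReal (4*p*(1-p)) := by
    rw [hC, hP, hQ, ← ENNReal.ofReal_mul hp0.le]
    rw [show (4:ℝ≥0∞) = ENNReal.ofReal 4 by norm_num]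
    rw [← ENNReal.ofReal_mul (by norm_num)]
    ring_nf
  rw [hCval, ← ENNReal.ofReal_pow (by nlinarith)]
  apply ENNReal.ofReal_le_ofReal
  have hbase := base_exp_ineq p hp0 hp1
  have hexp : Real.exp (-(3 * (1 - 2*p) ^ 2 * m) / (2 * (1 + 4*p))) =
      (Real.exp (-(3 * (1 - 2*p) ^ 2) / (2 * (1 + 4*p))))^m := by
    rw [← Real.exp_nat_mul]
    congr 1
    ring
  rw [hexp]
  exact pow_le_pow_left₀ (by nlinarith) hbase m
end

section
/- Let 0 < p < 1/2 and let (X_t) be the p-biased nearest-neighbor random walk on ℤ started at n ∈ ℤ (steps are i.i.d., equal to −1 with probability p and +1 with probability 1−p). Let A = {X_t ≥ n for all t ≥ 0} be the event that the walk never goes left of n, and let T_n = sup{t ≥ 0 : X_t = n} be the time of the last visit to n. Then P(A) > 0, and for every t ≥ 0 the conditional probability P(T_n ≥ t | A) is at most P(T_n ≥ t); that is, the law of the last return time conditioned on A is stochastically dominated by its unconditioned law. -/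
open MeasureTheory ProbabilityTheory

open Filter Finset Topology

namespace Stmt6Aux

variable {Ω : Type*} [MeasurableSpace Ω] {μ : Measure Ω} [IsFiniteMeasure μ]
  {p : ℝ} {ξ : ℕ → Ω → ℤ}

noncomputable def w (p : ℝ) (c : ℤ) : ENNReal :=
  if c = -1 then ENNReal.ofReal p else if c = 1 then ENNReal.ofReal (1-p) else 0

def Vec (ξ : ℕ → Ω → ℤ) (u k : ℕ) : Ω → (Fin k → ℤ) := fun ω i => ξ (u + i) ω

lemma measurable_Vec (hmeas : ∀ i, Measurable (ξ i)) (u k : ℕ) :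
    Measurable (Vec ξ u k) :=
  measurable_pi_lambda _ fun i => hmeas (u + i)

lemma marg (hp0 : 0 ≤ p) (hp1 : p ≤ 1) (hmeas : ∀ i, Measurable (ξ i))
    [IsProbabilityMeasure μ]
    (hneg : ∀ i, μ {ω | ξ i ω = -1} = ENNReal.ofReal p)
    (hpos : ∀ i, μ {ω | ξ i ω = 1} = ENNReal.ofReal (1-p)) (m : ℕ) (c : ℤ) :
    μ {ω | ξ m ω = c} = w p c := by
  have hm1 : MeasurableSet {ω | ξ m ω = -1} := (hmeas m) (MeasurableSet.singleton (-1))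
  have hm2 : MeasurableSet {ω | ξ m ω = 1} := (hmeas m) (MeasurableSet.singleton 1)
  unfold w
  split_ifs with h1 h2
  · subst h1; exact hneg m
  · subst h2; exact hpos m
  · have hdisj : Disjoint {ω | ξ m ω = -1} {ω | ξ m ω = 1} := by
      rw [Set.disjoint_left]; intro ω h h'; simp only [Set.mem_setOf_eq] at h h'; omega
    have hu : μ ({ω | ξ m ω = -1} ∪ {ω | ξ m ω = 1}) = 1 := by
      rw [measure_union hdisj hm2, hneg m, hpos m, ← ENNReal.ofReal_add hp0 (by linarith)]
      norm_num
    have hc : μ ({ω | ξ m ω = -1} ∪ {ω | ξ m ω = 1})ᶜ = 0 := by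
      rw [measure_compl (hm1.union hm2) (measure_ne_top _ _), hu, measure_univ, tsub_self]
    refine le_antisymm (le_trans (measure_mono ?_) hc.le) zero_le
    intro ω hω
    simp only [Set.mem_compl_iff, Set.mem_union, Set.mem_setOf_eq] at *
    omega

lemma blockmeas (hmeas : ∀ i, Measurable (ξ i))
    (hindep : iIndepFun ξ μ)
    (hw : ∀ m c, μ {ω | ξ m ω = c} = w p c)
    (u k : ℕ) (x : Fin k → ℤ) :
    μ (⋂ i : Fin k, {ω | ξ (u + i) ω = x i}) = ∏ i : Fin k, w p (x i) := by
  classical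
  set y : ℕ → ℤ := fun m => if h : m - u < k then x ⟨m - u, h⟩ else 0 with hy
  have hset : (⋂ i : Fin k, {ω | ξ (u + i) ω = x i})
      = ⋂ m ∈ Finset.Ico u (u+k), ξ m ⁻¹' {y m} := by
    ext ω
    simp only [Set.mem_iInter, Set.mem_setOf_eq, Finset.mem_Ico, Set.mem_preimage,
      Set.mem_singleton_iff]
    constructor
    · intro h m hm
      have h1 : m - u < k := by omega
      rw [hy]; simp only [h1, dif_pos]
      have h3 := h ⟨m - u, h1⟩
      simpa [show u + (m - u) = m by omega] using h3
    · intro h i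
      have hm : u ≤ u + (i:ℕ) ∧ u + (i:ℕ) < u + k := by omega
      have := h (u + i) hm
      rw [hy] at this; simp only [Nat.add_sub_cancel_left] at this
      rw [dif_pos i.isLt] at this
      simpa using this
  rw [hset]
  rw [hindep.measure_inter_preimage_eq_mul (Finset.Ico u (u+k))
    (fun m hm => MeasurableSet.singleton (y m))]
  have : ∀ m, μ (ξ m ⁻¹' {y m}) = w p (y m) := fun m => hw m (y m)
  simp_rw [this]
  rw [Finset.prod_Ico_eq_prod_range]
  simp only [Nat.add_sub_cancel_left]
  rw [← Fin.prod_univ_eq_prod_range (fun j => w p (y (u + j))) k]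
  refine Finset.prod_congr rfl fun i _ => ?_
  rw [hy]; simp only [Nat.add_sub_cancel_left, i.isLt, dif_pos]

lemma vec_decomp (u k : ℕ) (s : Set (Fin k → ℤ)) :
    Vec ξ u k ⁻¹' s = ⋃ x : s, ⋂ i : Fin k, {ω | ξ (u + i) ω = (x : Fin k → ℤ) i} := by
  ext ω
  simp only [Set.mem_preimage, Set.mem_iUnion, Set.mem_iInter, Set.mem_setOf_eq]
  constructor
  · intro h; exact ⟨⟨Vec ξ u k ω, h⟩, fun i => rfl⟩
  · rintro ⟨⟨x, hx⟩, h⟩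
    have : Vec ξ u k ω = x := funext fun i => h i
    rwa [this]

lemma measure_vec_preimage (hmeas : ∀ i, Measurable (ξ i))
    (hblock : ∀ (u k : ℕ) (x : Fin k → ℤ),
      μ (⋂ i : Fin k, {ω | ξ (u + i) ω = x i}) = ∏ i : Fin k, w p (x i))
    (u k : ℕ) (s : Set (Fin k → ℤ)) :
    μ (Vec ξ u k ⁻¹' s) = ∑' x : s, ∏ i : Fin k, w p ((x : Fin k → ℤ) i) := by
  rw [vec_decomp]
  rw [measure_iUnion ?_ ?_]
  · exact tsum_congr fun x => hblock u k x
  · intro a b hab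
    rw [Function.onFun, Set.disjoint_left]
    intro ω ha hb
    simp only [Set.mem_iInter, Set.mem_setOf_eq] at ha hb
    apply hab
    apply Subtype.ext
    funext i
    rw [← ha i, ← hb i]
  · intro x
    exact MeasurableSet.iInter fun i => (hmeas (u + i)) (MeasurableSet.singleton _)

lemma fin_shift (hmeas : ∀ i, Measurable (ξ i))
    (hblock : ∀ (u k : ℕ) (x : Fin k → ℤ),
      μ (⋂ i : Fin k, {ω | ξ (u + i) ω = x i}) = ∏ i : Fin k, w p (x i))
    (u k : ℕ) (s : Set (Fin k → ℤ)) :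
    μ (Vec ξ u k ⁻¹' s) = μ (Vec ξ 0 k ⁻¹' s) := by
  rw [measure_vec_preimage hmeas hblock, measure_vec_preimage hmeas hblock]

def Ash (ξ : ℕ → Ω → ℤ) (c : ℤ) (u : ℕ) : Set Ω :=
  {ω | ∀ v, c ≤ ∑ i ∈ Finset.Ico u (u+v), ξ i ω}

lemma mem_Ash_zero {c : ℤ} {ω : Ω} :
    ω ∈ Ash ξ c 0 ↔ ∀ v, c ≤ ∑ i ∈ Finset.range v, ξ i ω := by
  constructor <;> intro h v
  · have := h v
    rwa [Nat.zero_add, ← Finset.range_eq_Ico] at this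
  · show c ≤ ∑ i ∈ Finset.Ico 0 (0+v), ξ i ω
    rw [Nat.zero_add, ← Finset.range_eq_Ico]
    exact h v

def xe {k : ℕ} (x : Fin k → ℤ) (i : ℕ) : ℤ := if h : i < k then x ⟨i, h⟩ else 0

lemma sum_xe_vec {u v : ℕ} (hv : v ≤ u) (ω : Ω) :
    ∑ i ∈ Finset.range v, xe (Vec ξ 0 u ω) i = ∑ i ∈ Finset.range v, ξ i ω := by
  refine Finset.sum_congr rfl fun i hi => ?_
  rw [xe, dif_pos (lt_of_lt_of_le (Finset.mem_range.mp hi) hv)]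
  show ξ (0 + i) ω = ξ i ω
  rw [Nat.zero_add]

def DD (c : ℤ) (k : ℕ) : Set (Fin k → ℤ) := {x | ∀ v ≤ k, c ≤ ∑ i ∈ Finset.range v, xe x i}

lemma preD (u k : ℕ) (c : ℤ) : Vec ξ u k ⁻¹' DD c k
    = {ω | ∀ v ≤ k, c ≤ ∑ i ∈ Finset.Ico u (u+v), ξ i ω} := by
  ext ω
  simp only [Set.mem_preimage, DD, Set.mem_setOf_eq]
  have key : ∀ v, v ≤ k → ∑ i ∈ Finset.range v, xe (Vec ξ u k ω) i
      = ∑ i ∈ Finset.Ico u (u+v), ξ i ω := by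
    intro v hv
    rw [Finset.sum_Ico_eq_sum_range]
    simp only [Nat.add_sub_cancel_left]
    refine Finset.sum_congr rfl fun i hi => ?_
    rw [Finset.mem_range] at hi
    rw [xe, dif_pos (lt_of_lt_of_le hi hv)]
    rfl
  constructor <;> intro h v hv
  · rw [← key v hv]; exact h v hv
  · rw [key v hv]; exact h v hv

lemma Ash_eq (c : ℤ) (u : ℕ) : Ash ξ c u = ⋂ k, Vec ξ u k ⁻¹' DD c k := by
  ext ω
  simp only [Ash, Set.mem_setOf_eq, Set.mem_iInter]
  constructor
  · intro h k
    rw [preD]; exact fun v _ => h v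
  · intro h v
    have := h v; rw [preD] at this; exact this v le_rfl

lemma anti_D (u : ℕ) (c : ℤ) : Antitone (fun k => Vec ξ u k ⁻¹' DD c k) := by
  intro a b hab
  show Vec ξ u b ⁻¹' DD c b ≤ Vec ξ u a ⁻¹' DD c a
  rw [preD, preD]
  intro ω h v hv
  exact h v (hv.trans hab)

lemma measD {k : ℕ} (c : ℤ) : MeasurableSet (DD c k) := (Set.to_countable _).measurableSet

lemma tendsto_D (hmeas : ∀ i, Measurable (ξ i)) (c : ℤ) (u : ℕ) :
    Tendsto (fun k => μ (Vec ξ u k ⁻¹' DD c k)) atTop (𝓝 (μ (Ash ξ c u))) := by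
  rw [Ash_eq]
  exact tendsto_measure_iInter_atTop
    (fun k => ((measurable_Vec hmeas u k) (measD c)).nullMeasurableSet)
    (anti_D u c) ⟨0, measure_ne_top μ _⟩

lemma measurable_Ash (hmeas : ∀ i, Measurable (ξ i)) (c : ℤ) (u : ℕ) :
    MeasurableSet (Ash ξ c u) := by
  rw [Ash_eq]
  exact MeasurableSet.iInter fun k => (measurable_Vec hmeas u k) (measD c)

lemma shift (hmeas : ∀ i, Measurable (ξ i))
    (hfin : ∀ (u k : ℕ) (s : Set (Fin k → ℤ)), μ (Vec ξ u k ⁻¹' s) = μ (Vec ξ 0 k ⁻¹' s))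
    (c : ℤ) (u : ℕ) : μ (Ash ξ c u) = μ (Ash ξ c 0) := by
  have h1 := tendsto_D (μ := μ) hmeas c u
  have h2 := tendsto_D (μ := μ) hmeas c 0
  have heq : (fun k => μ (Vec ξ u k ⁻¹' DD c k)) = fun k => μ (Vec ξ 0 k ⁻¹' DD c k) :=
    funext fun k => hfin u k (DD c k)
  rw [heq] at h1
  exact tendsto_nhds_unique h1 h2

lemma indep_block (hmeas : ∀ i, Measurable (ξ i))
    (hindep : iIndepFun ξ μ)
    (u : ℕ) (s : Set (Fin u → ℤ)) (c : ℤ) :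
    μ (Vec ξ 0 u ⁻¹' s ∩ Ash ξ c u) = μ (Vec ξ 0 u ⁻¹' s) * μ (Ash ξ c u) := by
  have hind : ∀ k, IndepFun (Vec ξ 0 u) (Vec ξ u k) μ := by
    intro k
    have hdisj : Disjoint (Finset.range u) (Finset.Ico u (u+k)) := by
      rw [Finset.disjoint_left]
      intro a ha hb
      rw [Finset.mem_range] at ha
      rw [Finset.mem_Ico] at hb
      omega
    have h := hindep.indepFun_finset (Finset.range u) (Finset.Ico u (u+k)) hdisj hmeas
    have hφ : Measurable (fun (f : {x // x ∈ Finset.range u} → ℤ) (i : Fin u) =>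
        f ⟨(i:ℕ), Finset.mem_range.mpr i.isLt⟩) :=
      measurable_pi_lambda _ fun i => measurable_pi_apply _
    have hψ : Measurable (fun (f : {x // x ∈ Finset.Ico u (u+k)} → ℤ) (i : Fin k) =>
        f ⟨u + (i:ℕ), Finset.mem_Ico.mpr (by omega)⟩) :=
      measurable_pi_lambda _ fun i => measurable_pi_apply _
    have h2 := h.comp hφ hψ
    have e1 : ((fun (f : {x // x ∈ Finset.range u} → ℤ) (i : Fin u) =>
        f ⟨(i:ℕ), Finset.mem_range.mpr i.isLt⟩) ∘ (fun a (i : {x // x ∈ Finset.range u}) => ξ i a))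
        = Vec ξ 0 u := by
      funext ω i; simp [Vec]
    have e2 : ((fun (f : {x // x ∈ Finset.Ico u (u+k)} → ℤ) (i : Fin k) =>
        f ⟨u + (i:ℕ), Finset.mem_Ico.mpr (by omega)⟩) ∘
          (fun a (i : {x // x ∈ Finset.Ico u (u+k)}) => ξ i a))
        = Vec ξ u k := by
      funext ω i; simp [Vec]
    rwa [e1, e2] at h2
  have hkey : ∀ k, μ (Vec ξ 0 u ⁻¹' s ∩ Vec ξ u k ⁻¹' DD c k)
      = μ (Vec ξ 0 u ⁻¹' s) * μ (Vec ξ u k ⁻¹' DD c k) := fun k =>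
    (hind k).measure_inter_preimage_eq_mul s (DD c k) (Set.to_countable _).measurableSet (measD c)
  have hiInter : (⋂ k, Vec ξ 0 u ⁻¹' s ∩ Vec ξ u k ⁻¹' DD c k)
      = Vec ξ 0 u ⁻¹' s ∩ Ash ξ c u := by
    rw [Ash_eq, Set.inter_iInter]
  have ht1 : Tendsto (fun k => μ (Vec ξ 0 u ⁻¹' s ∩ Vec ξ u k ⁻¹' DD c k)) atTop
      (𝓝 (μ (Vec ξ 0 u ⁻¹' s ∩ Ash ξ c u))) := by
    rw [← hiInter]
    exact tendsto_measure_iInter_atTop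
      (fun k => (((measurable_Vec hmeas 0 u) (Set.to_countable _).measurableSet).inter
        ((measurable_Vec hmeas u k) (measD c))).nullMeasurableSet)
      (fun a b hab => Set.inter_subset_inter_right _ (anti_D u c hab))
      ⟨0, measure_ne_top μ _⟩
  have ht2 : Tendsto (fun k => μ (Vec ξ 0 u ⁻¹' s) * μ (Vec ξ u k ⁻¹' DD c k)) atTop
      (𝓝 (μ (Vec ξ 0 u ⁻¹' s) * μ (Ash ξ c u))) :=
    ENNReal.Tendsto.const_mul (tendsto_D hmeas c u) (Or.inr (measure_ne_top μ _))
  have := funext hkey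
  rw [this] at ht1
  exact tendsto_nhds_unique ht1 ht2

lemma ae_pm [IsProbabilityMeasure μ] (hp0 : 0 ≤ p) (hp1 : p ≤ 1)
    (hmeas : ∀ i, Measurable (ξ i))
    (hneg : ∀ i, μ {ω | ξ i ω = -1} = ENNReal.ofReal p)
    (hpos : ∀ i, μ {ω | ξ i ω = 1} = ENNReal.ofReal (1-p)) (i : ℕ) :
    ∀ᵐ ω ∂μ, ξ i ω = -1 ∨ ξ i ω = 1 := by
  rw [ae_iff]
  have hm1 : MeasurableSet {ω | ξ i ω = -1} := (hmeas i) (MeasurableSet.singleton _)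
  have hm2 : MeasurableSet {ω | ξ i ω = 1} := (hmeas i) (MeasurableSet.singleton _)
  have hdisj : Disjoint {ω | ξ i ω = -1} {ω | ξ i ω = 1} := by
    rw [Set.disjoint_left]; intro ω h h'; simp only [Set.mem_setOf_eq] at h h'; omega
  have hu : μ ({ω | ξ i ω = -1} ∪ {ω | ξ i ω = 1}) = 1 := by
    rw [measure_union hdisj hm2, hneg i, hpos i, ← ENNReal.ofReal_add hp0 (by linarith)]
    norm_num
  have hs : {a | ¬(ξ i a = -1 ∨ ξ i a = 1)} = ({ω | ξ i ω = -1} ∪ {ω | ξ i ω = 1})ᶜ := by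
    ext ω; simp [not_or]
  rw [hs, measure_compl (hm1.union hm2) (measure_ne_top _ _), hu, measure_univ, tsub_self]

lemma slln_aux [IsProbabilityMeasure μ] (hp0 : 0 < p) (hp1 : p < 1/2)
    (hmeas : ∀ i, Measurable (ξ i))
    (hindep : iIndepFun ξ μ)
    (hneg : ∀ i, μ {ω | ξ i ω = -1} = ENNReal.ofReal p)
    (hpos : ∀ i, μ {ω | ξ i ω = 1} = ENNReal.ofReal (1-p))
    (hw : ∀ m c, μ {ω | ξ m ω = c} = w p c) :
    ∀ᵐ ω ∂μ, ∃ k : ℕ, ∀ v, -(k:ℤ) ≤ ∑ i ∈ Finset.range v, ξ i ω := by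
  classical
  set Y : ℕ → Ω → ℝ := fun i ω => ((ξ i ω : ℤ) : ℝ) with hY
  set Z : ℕ → Ω → ℝ := fun i ω => if ξ i ω = -1 then (-1:ℝ) else 1 with hZ
  have hZeq : ∀ i, Y i =ᵐ[μ] Z i := by
    intro i
    filter_upwards [ae_pm hp0.le (by linarith) hmeas hneg hpos i] with ω h
    rcases h with h | h <;> simp [hY, hZ, h]
  have hZmeas : ∀ i, Measurable (Z i) := fun i =>
    Measurable.ite ((hmeas i) (MeasurableSet.singleton _)) measurable_const measurable_const
  have hint : ∀ i, Integrable (Y i) μ := by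
    intro i
    refine (Integrable.mono' (integrable_const (1:ℝ)) (hZmeas i).aestronglyMeasurable ?_).congr
      (hZeq i).symm
    filter_upwards with ω
    simp only [hZ]
    split <;> simp
  have hpair : Pairwise (Function.onFun (IndepFun · · μ) Y) := by
    intro i j hij
    exact (hindep.indepFun hij).comp measurable_from_top measurable_from_top
  have hident : ∀ i, IdentDistrib (Y i) (Y 0) μ μ := by
    intro i
    have hbase : IdentDistrib (ξ i) (ξ 0) μ μ :=
      ⟨(hmeas i).aemeasurable, (hmeas 0).aemeasurable,
        MeasureTheory.Measure.ext_of_singleton fun a => by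
          rw [Measure.map_apply (hmeas i) (MeasurableSet.singleton a),
            Measure.map_apply (hmeas 0) (MeasurableSet.singleton a)]
          show μ {ω | ξ i ω = a} = μ {ω | ξ 0 ω = a}
          rw [hw i a, hw 0 a]⟩
    exact hbase.comp measurable_from_top
  have hE : μ[Y 0] = 1 - 2*p := by
    rw [integral_congr_ae (hZeq 0)]
    have hz0 : Z 0 = fun ω => 1 - Set.indicator {ω | ξ 0 ω = -1} (fun _ => (2:ℝ)) ω := by
      funext ω
      simp only [hZ, Set.indicator, Set.mem_setOf_eq]
      split_ifs <;> norm_num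
    have hfin : ∫ ω, (1 - Set.indicator {ω | ξ 0 ω = -1} (fun _ => (2:ℝ)) ω) ∂μ = 1 - 2*p := by
      have hsub : ∫ ω, (1 - Set.indicator {ω | ξ 0 ω = -1} (fun _ => (2:ℝ)) ω) ∂μ
          = (∫ _ω, (1:ℝ) ∂μ) - ∫ ω, Set.indicator {ω | ξ 0 ω = -1} (fun _ => (2:ℝ)) ω ∂μ :=
        integral_sub (integrable_const 1)
          ((integrable_const (2:ℝ)).indicator ((hmeas 0) (MeasurableSet.singleton _)))
      rw [hsub]
      rw [integral_const, integral_indicator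
        (show MeasurableSet {ω | ξ 0 ω = -1} from (hmeas 0) (MeasurableSet.singleton _)),
        setIntegral_const]
      rw [measureReal_def (s := {ω | ξ 0 ω = -1}), hneg 0]
      simp [ENNReal.toReal_ofReal hp0.le]
      ring
    rw [hz0]
    exact hfin
  have hslln := strong_law_ae_real Y (hint 0) hpair hident
  rw [hE] at hslln
  filter_upwards [hslln] with ω hω
  have hev : ∀ᶠ n in atTop, 0 < (∑ i ∈ Finset.range n, Y i ω) / n :=
    hω.eventually (eventually_gt_nhds (by linarith))
  obtain ⟨N, hN⟩ := eventually_atTop.mp hev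
  have hSnonneg : ∀ n, N ≤ n → 0 ≤ ∑ i ∈ Finset.range n, ξ i ω := by
    intro n hn
    by_contra hc
    push_neg at hc
    have h1 := hN n hn
    have h2 : (∑ i ∈ Finset.range n, Y i ω) = ((∑ i ∈ Finset.range n, ξ i ω : ℤ) : ℝ) := by
      push_cast [hY]; rfl
    have h3 : ((∑ i ∈ Finset.range n, ξ i ω : ℤ) : ℝ) < 0 := by exact_mod_cast hc
    rw [h2] at h1
    have hdn : ((∑ i ∈ Finset.range n, ξ i ω : ℤ) : ℝ) / (n:ℝ) ≤ 0 :=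
      div_nonpos_of_nonpos_of_nonneg h3.le (Nat.cast_nonneg n)
    linarith
  refine ⟨(Finset.range N).sup fun v => (-(∑ i ∈ Finset.range v, ξ i ω)).toNat, fun v => ?_⟩
  by_cases hv : N ≤ v
  · have h0 := hSnonneg v hv
    omega
  · push_neg at hv
    have hle : (-(∑ i ∈ Finset.range v, ξ i ω)).toNat
        ≤ (Finset.range N).sup fun v => (-(∑ i ∈ Finset.range v, ξ i ω)).toNat :=
      Finset.le_sup (f := fun v => (-(∑ i ∈ Finset.range v, ξ i ω)).toNat)
        (Finset.mem_range.mpr hv)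
    have h1 := Int.self_le_toNat (-(∑ i ∈ Finset.range v, ξ i ω))
    have h2 : ((-(∑ i ∈ Finset.range v, ξ i ω)).toNat : ℤ)
        ≤ ((Finset.range N).sup fun v => (-(∑ i ∈ Finset.range v, ξ i ω)).toNat : ℕ) :=
      Int.ofNat_le.mpr hle
    omega

lemma part1 [IsProbabilityMeasure μ] (hp0 : 0 < p) (hp1 : p < 1/2)
    (hmeas : ∀ i, Measurable (ξ i))
    (hindep : iIndepFun ξ μ)
    (hneg : ∀ i, μ {ω | ξ i ω = -1} = ENNReal.ofReal p)
    (hpos : ∀ i, μ {ω | ξ i ω = 1} = ENNReal.ofReal (1-p)) :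
    0 < μ (Ash ξ 0 0) := by
  classical
  have hw : ∀ m c, μ {ω | ξ m ω = c} = w p c :=
    marg hp0.le (by linarith) hmeas hneg hpos
  have hblock := blockmeas hmeas hindep hw
  have hfin := fin_shift hmeas hblock
  have hae := slln_aux hp0 hp1 hmeas hindep hneg hpos hw
  have hmemb : ∀ᵐ ω ∂μ, ω ∈ ⋃ k : ℕ, Ash ξ (-(k:ℤ)) 0 := by
    filter_upwards [hae] with ω h
    obtain ⟨k, hk⟩ := h
    refine Set.mem_iUnion.mpr ⟨k, mem_Ash_zero.mpr hk⟩
  have hk0 : ∃ k : ℕ, μ (Ash ξ (-(k:ℤ)) 0) ≠ 0 := by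
    by_contra hcon
    push_neg at hcon
    have hU : μ (⋃ k : ℕ, Ash ξ (-(k:ℤ)) 0) = 0 := measure_iUnion_null hcon
    rw [ae_iff] at hmemb
    have hle : (1:ENNReal) ≤ μ (⋃ k : ℕ, Ash ξ (-(k:ℤ)) 0)
        + μ {ω | ¬ ω ∈ ⋃ k : ℕ, Ash ξ (-(k:ℤ)) 0} := by
      rw [← measure_univ (μ := μ)]
      refine le_trans (measure_mono ?_) (measure_union_le _ _)
      intro ω _
      by_cases h : ω ∈ ⋃ k : ℕ, Ash ξ (-(k:ℤ)) 0
      · exact Or.inl h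
      · exact Or.inr h
    rw [hU, hmemb] at hle
    simp at hle
  obtain ⟨k, hk⟩ := hk0
  set s1 : Set (Fin k → ℤ) := {x | ∀ i, x i = 1} with hs1
  have hpre : Vec ξ 0 k ⁻¹' s1 = ⋂ i : Fin k, {ω | ξ (0 + i) ω = (fun _ : Fin k => (1:ℤ)) i} := by
    ext ω
    simp [Vec, hs1, Set.mem_iInter]
  have h1 : μ (Vec ξ 0 k ⁻¹' s1) = ENNReal.ofReal (1-p) ^ k := by
    rw [hpre, hblock 0 k fun _ => 1]
    simp [w, Finset.prod_const]
  have hposmeas : 0 < μ (Vec ξ 0 k ⁻¹' s1 ∩ Ash ξ (-(k:ℤ)) k) := by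
    rw [indep_block hmeas hindep k s1 (-(k:ℤ)), h1, shift hmeas hfin (-(k:ℤ)) k]
    refine ENNReal.mul_pos (pow_ne_zero _ ?_) hk
    exact (ENNReal.ofReal_pos.mpr (by linarith)).ne'
  refine lt_of_lt_of_le hposmeas (measure_mono ?_)
  rintro ω ⟨h1s, h2s⟩
  rw [mem_Ash_zero]
  intro v
  have hones : ∀ i, i < k → ξ i ω = 1 := by
    intro i hi
    have h3 : Vec ξ 0 k ω ⟨i, hi⟩ = 1 := h1s ⟨i, hi⟩
    simpa [Vec] using h3
  have hrange : ∀ m, m ≤ k → ∑ i ∈ Finset.range m, ξ i ω = m := by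
    intro m hm
    rw [Finset.sum_congr rfl fun i hi => hones i (lt_of_lt_of_le (Finset.mem_range.mp hi) hm)]
    simp
  by_cases hv : v ≤ k
  · rw [hrange v hv]
    exact Int.ofNat_nonneg v
  · push_neg at hv
    have hsplit : ∑ i ∈ Finset.range k, ξ i ω + ∑ i ∈ Finset.Ico k v, ξ i ω
        = ∑ i ∈ Finset.range v, ξ i ω :=
      Finset.sum_range_add_sum_Ico _ hv.le
    have h4 := h2s (v - k)
    have h5 : k + (v - k) = v := by omega
    rw [h5] at h4
    have h6 := hrange k le_rfl
    omega

end Stmt6Aux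
namespace Stmt6Aux

variable {Ω : Type*} [MeasurableSpace Ω] {μ : Measure Ω} [IsFiniteMeasure μ]
  {p : ℝ} {ξ : ℕ → Ω → ℤ}

def Ev (ξ : ℕ → Ω → ℤ) (t u : ℕ) : Set Ω :=
  {ω | t ≤ u ∧ (∀ v ≤ u, 0 ≤ ∑ i ∈ Finset.range v, ξ i ω) ∧
    (∑ i ∈ Finset.range u, ξ i ω) = 0 ∧
    ∀ v, t ≤ v → v < u → (∑ i ∈ Finset.range v, ξ i ω) ≠ 0}

def Fv (ξ : ℕ → Ω → ℤ) (t u : ℕ) : Set Ω :=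
  {ω | t ≤ u ∧ (∑ i ∈ Finset.range u, ξ i ω) = 0 ∧
    ∀ v, t ≤ v → v < u → (∑ i ∈ Finset.range v, ξ i ω) ≠ 0}

def sEv (t u : ℕ) : Set (Fin u → ℤ) :=
  {x | t ≤ u ∧ (∀ v ≤ u, 0 ≤ ∑ i ∈ Finset.range v, xe x i) ∧
    (∑ i ∈ Finset.range u, xe x i) = 0 ∧
    ∀ v, t ≤ v → v < u → (∑ i ∈ Finset.range v, xe x i) ≠ 0}

def sFv (t u : ℕ) : Set (Fin u → ℤ) :=
  {x | t ≤ u ∧ (∑ i ∈ Finset.range u, xe x i) = 0 ∧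
    ∀ v, t ≤ v → v < u → (∑ i ∈ Finset.range v, xe x i) ≠ 0}

lemma Ev_pre (t u : ℕ) : Ev ξ t u = Vec ξ 0 u ⁻¹' sEv t u := by
  ext ω
  simp only [Ev, sEv, Set.mem_preimage, Set.mem_setOf_eq]
  have hx : ∀ v, v ≤ u →
      ∑ i ∈ Finset.range v, xe (Vec ξ 0 u ω) i = ∑ i ∈ Finset.range v, ξ i ω :=
    fun v hv => sum_xe_vec hv ω
  constructor
  · rintro ⟨h1, h2, h3, h4⟩
    refine ⟨h1, fun v hv => ?_, ?_, fun v hv hvu => ?_⟩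
    · rw [hx v hv]; exact h2 v hv
    · rw [hx u le_rfl]; exact h3
    · rw [hx v hvu.le]; exact h4 v hv hvu
  · rintro ⟨h1, h2, h3, h4⟩
    refine ⟨h1, fun v hv => ?_, ?_, fun v hv hvu => ?_⟩
    · rw [← hx v hv]; exact h2 v hv
    · rw [← hx u le_rfl]; exact h3
    · rw [← hx v hvu.le]; exact h4 v hv hvu

lemma Fv_pre (t u : ℕ) : Fv ξ t u = Vec ξ 0 u ⁻¹' sFv t u := by
  ext ω
  simp only [Fv, sFv, Set.mem_preimage, Set.mem_setOf_eq]
  have hx : ∀ v, v ≤ u →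
      ∑ i ∈ Finset.range v, xe (Vec ξ 0 u ω) i = ∑ i ∈ Finset.range v, ξ i ω :=
    fun v hv => sum_xe_vec hv ω
  constructor
  · rintro ⟨h1, h3, h4⟩
    refine ⟨h1, ?_, fun v hv hvu => ?_⟩
    · rw [hx u le_rfl]; exact h3
    · rw [hx v hvu.le]; exact h4 v hv hvu
  · rintro ⟨h1, h3, h4⟩
    refine ⟨h1, ?_, fun v hv hvu => ?_⟩
    · rw [← hx u le_rfl]; exact h3
    · rw [← hx v hvu.le]; exact h4 v hv hvu

lemma EsubF (t u : ℕ) : Ev ξ t u ⊆ Fv ξ t u := by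
  rintro ω ⟨h1, _, h3, h4⟩
  exact ⟨h1, h3, h4⟩

lemma decompB (t : ℕ) :
    {ω | ∃ u, t ≤ u ∧ ∑ i ∈ Finset.range u, ξ i ω = 0} = ⋃ u, Fv ξ t u := by
  classical
  ext ω
  simp only [Set.mem_setOf_eq, Set.mem_iUnion]
  constructor
  · intro hex
    refine ⟨Nat.find hex, ?_⟩
    refine ⟨(Nat.find_spec hex).1, (Nat.find_spec hex).2, fun v hv hvu hz => ?_⟩
    exact Nat.find_min hex hvu ⟨hv, hz⟩
  · rintro ⟨u, h1, h2, -⟩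
    exact ⟨u, h1, h2⟩

lemma disjF (t : ℕ) : Pairwise (Function.onFun Disjoint (Fv ξ t)) := by
  intro a b hab
  rw [Function.onFun, Set.disjoint_left]
  intro ω ha hb
  simp only [Fv, Set.mem_setOf_eq] at ha hb
  rcases lt_or_gt_of_ne hab with h | h
  · exact hb.2.2 a ha.1 h ha.2.1
  · exact ha.2.2 b hb.1 h hb.2.1

lemma disjEA (t : ℕ) :
    Pairwise (Function.onFun Disjoint (fun u => Ev ξ t u ∩ Ash ξ 0 u)) := by
  intro a b hab
  rw [Function.onFun, Set.disjoint_left]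
  rintro ω ⟨haE, -⟩ ⟨hbE, -⟩
  simp only [Ev, Set.mem_setOf_eq] at haE hbE
  rcases lt_or_gt_of_ne hab with h | h
  · exact hbE.2.2.2 a haE.1 h haE.2.2.1
  · exact haE.2.2.2 b hbE.1 h hbE.2.2.1

lemma decompA (t : ℕ) :
    Ash ξ 0 0 ∩ {ω | ∃ u, t ≤ u ∧ ∑ i ∈ Finset.range u, ξ i ω = 0}
      = ⋃ u, (Ev ξ t u ∩ Ash ξ 0 u) := by
  classical
  ext ω
  constructor
  · rintro ⟨hA, hB⟩
    have hA' := mem_Ash_zero.mp hA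
    have hex : ∃ u, t ≤ u ∧ ∑ i ∈ Finset.range u, ξ i ω = 0 := hB
    refine Set.mem_iUnion.mpr ⟨Nat.find hex, ⟨?_, ?_⟩⟩
    · exact ⟨(Nat.find_spec hex).1, fun v _ => hA' v, (Nat.find_spec hex).2,
        fun v hv hvu hz => Nat.find_min hex hvu ⟨hv, hz⟩⟩
    · intro v
      have hsplit : ∑ i ∈ Finset.range (Nat.find hex), ξ i ω
          + ∑ i ∈ Finset.Ico (Nat.find hex) (Nat.find hex + v), ξ i ω
          = ∑ i ∈ Finset.range (Nat.find hex + v), ξ i ω :=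
        Finset.sum_range_add_sum_Ico _ (Nat.le_add_right (Nat.find hex) v)
      have h0 := (Nat.find_spec hex).2
      have h1 := hA' (Nat.find hex + v)
      omega
  · intro h
    obtain ⟨u, hE, hAsh⟩ := Set.mem_iUnion.mp h
    obtain ⟨h1, h2, h3, h4⟩ := hE
    refine ⟨mem_Ash_zero.mpr fun v => ?_, ⟨u, h1, h3⟩⟩
    by_cases hv : v ≤ u
    · exact h2 v hv
    · push_neg at hv
      have hsplit : ∑ i ∈ Finset.range u, ξ i ω + ∑ i ∈ Finset.Ico u v, ξ i ω
          = ∑ i ∈ Finset.range v, ξ i ω :=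
        Finset.sum_range_add_sum_Ico _ hv.le
      have h5 := hAsh (v - u)
      rw [show u + (v - u) = v by omega] at h5
      omega

end Stmt6Aux


/-- For the `p`-biased nearest-neighbor random walk on `ℤ` started at `n`
(with `0 < p < 1/2`), let `A = {∀ t, X t ≥ n}` be the event that the walk never goes
left of `n`, and let `T_n = sup {t : X t = n}` be the time of the last visit to `n`.
Then `P(A) > 0` and for every `t ≥ 0` the conditional probability `P(T_n ≥ t ∣ A)` is at
most `P(T_n ≥ t)` (the event `{T_n ≥ t}` being that the walk visits `n` at some time
`u ≥ t`); i.e. the conditioned last-return time is stochastically dominated by the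
unconditioned one. -/
theorem stmt6
    {Ω : Type*} [MeasurableSpace Ω] (μ : Measure Ω) [IsProbabilityMeasure μ]
    (p : ℝ) (hp0 : 0 < p) (hp1 : p < 1 / 2)
    (ξ : ℕ → Ω → ℤ)
    (hmeas : ∀ i, Measurable (ξ i))
    (hindep : iIndepFun ξ μ)
    (hneg : ∀ i, μ {ω | ξ i ω = -1} = ENNReal.ofReal p)
    (hpos : ∀ i, μ {ω | ξ i ω = 1} = ENNReal.ofReal (1 - p))
    (n : ℤ)
    (X : ℕ → Ω → ℤ)
    (hX : ∀ t ω, X t ω = n + ∑ i ∈ Finset.range t, ξ i ω) :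
    0 < μ {ω | ∀ t, n ≤ X t ω} ∧
    ∀ t : ℕ,
      μ[|{ω | ∀ u, n ≤ X u ω}] {ω | ∃ u, t ≤ u ∧ X u ω = n}
        ≤ μ {ω | ∃ u, t ≤ u ∧ X u ω = n} := by
  classical
  have hw : ∀ m c, μ {ω | ξ m ω = c} = Stmt6Aux.w p c :=
    Stmt6Aux.marg hp0.le (by linarith) hmeas hneg hpos
  have hblock := Stmt6Aux.blockmeas hmeas hindep hw
  have hfin := Stmt6Aux.fin_shift hmeas hblock
  have hApos := Stmt6Aux.part1 hp0 hp1 hmeas hindep hneg hpos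
  have hAset : {ω | ∀ t, n ≤ X t ω} = Stmt6Aux.Ash ξ 0 0 := by
    ext ω
    constructor
    · intro h
      refine Stmt6Aux.mem_Ash_zero.mpr fun v => ?_
      have := h v
      rw [hX] at this
      omega
    · intro h v
      have := Stmt6Aux.mem_Ash_zero.mp h v
      rw [hX]
      omega
  constructor
  · rw [hAset]; exact hApos
  intro t
  have hBset : {ω | ∃ u, t ≤ u ∧ X u ω = n}
      = {ω | ∃ u, t ≤ u ∧ ∑ i ∈ Finset.range u, ξ i ω = 0} := by
    ext ω
    simp only [Set.mem_setOf_eq, hX]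
    constructor <;> rintro ⟨u, hu, h⟩ <;> exact ⟨u, hu, by omega⟩
  rw [hAset, hBset]
  have hAmeas := Stmt6Aux.measurable_Ash hmeas 0 0
  have hFmeas : ∀ u, MeasurableSet (Stmt6Aux.Fv ξ t u) := fun u => by
    rw [Stmt6Aux.Fv_pre]
    exact (Stmt6Aux.measurable_Vec hmeas 0 u) (Set.to_countable _).measurableSet
  have hEAmeas : ∀ u, MeasurableSet (Stmt6Aux.Ev ξ t u ∩ Stmt6Aux.Ash ξ 0 u) := fun u => by
    rw [Stmt6Aux.Ev_pre]
    exact ((Stmt6Aux.measurable_Vec hmeas 0 u)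
      (Set.to_countable _).measurableSet).inter (Stmt6Aux.measurable_Ash hmeas 0 u)
  have hABle : μ (Stmt6Aux.Ash ξ 0 0 ∩ {ω | ∃ u, t ≤ u ∧ ∑ i ∈ Finset.range u, ξ i ω = 0})
      ≤ μ (Stmt6Aux.Ash ξ 0 0) * μ {ω | ∃ u, t ≤ u ∧ ∑ i ∈ Finset.range u, ξ i ω = 0} := by
    rw [Stmt6Aux.decompA t, measure_iUnion (Stmt6Aux.disjEA t) hEAmeas]
    have hstep : ∀ u, μ (Stmt6Aux.Ev ξ t u ∩ Stmt6Aux.Ash ξ 0 u)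
        = μ (Stmt6Aux.Ev ξ t u) * μ (Stmt6Aux.Ash ξ 0 0) := by
      intro u
      rw [Stmt6Aux.Ev_pre, Stmt6Aux.indep_block hmeas hindep u _ 0,
        Stmt6Aux.shift hmeas hfin 0 u]
    calc ∑' u, μ (Stmt6Aux.Ev ξ t u ∩ Stmt6Aux.Ash ξ 0 u)
        = ∑' u, μ (Stmt6Aux.Ev ξ t u) * μ (Stmt6Aux.Ash ξ 0 0) := tsum_congr hstep
      _ = (∑' u, μ (Stmt6Aux.Ev ξ t u)) * μ (Stmt6Aux.Ash ξ 0 0) := ENNReal.tsum_mul_right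
      _ ≤ (∑' u, μ (Stmt6Aux.Fv ξ t u)) * μ (Stmt6Aux.Ash ξ 0 0) := by
          exact mul_le_mul_left
            (ENNReal.tsum_le_tsum fun u => measure_mono (Stmt6Aux.EsubF t u)) _
      _ = μ (Stmt6Aux.Ash ξ 0 0) * ∑' u, μ (Stmt6Aux.Fv ξ t u) := mul_comm _ _
      _ = μ (Stmt6Aux.Ash ξ 0 0)
            * μ {ω | ∃ u, t ≤ u ∧ ∑ i ∈ Finset.range u, ξ i ω = 0} := by
          rw [← measure_iUnion (Stmt6Aux.disjF t) hFmeas, ← Stmt6Aux.decompB t]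
  calc μ[|Stmt6Aux.Ash ξ 0 0] {ω | ∃ u, t ≤ u ∧ ∑ i ∈ Finset.range u, ξ i ω = 0}
      = (μ (Stmt6Aux.Ash ξ 0 0))⁻¹
          * μ (Stmt6Aux.Ash ξ 0 0 ∩ {ω | ∃ u, t ≤ u ∧ ∑ i ∈ Finset.range u, ξ i ω = 0}) :=
        cond_apply hAmeas μ _
    _ ≤ (μ (Stmt6Aux.Ash ξ 0 0))⁻¹ * (μ (Stmt6Aux.Ash ξ 0 0)
          * μ {ω | ∃ u, t ≤ u ∧ ∑ i ∈ Finset.range u, ξ i ω = 0}) :=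
        mul_le_mul_right hABle _
    _ = μ {ω | ∃ u, t ≤ u ∧ ∑ i ∈ Finset.range u, ξ i ω = 0} := by
        rw [← mul_assoc, ENNReal.inv_mul_cancel hApos.ne' (measure_ne_top μ _), one_mul]
end

section
/- Let a, b ∈ (0,1]. Let N be a random variable with the geometric distribution Geo(a) and let (X_i)_{i≥1} be i.i.d. random variables with distribution Geo(b), with N and (X_i) all independent. Set S = X_1 + ⋯ + X_N (with S = 0 when N = 0). Then for every integer m ≥ 0, P(S ≥ m) ≤ (1−ab)^m; that is, S is stochastically dominated by a Geo(ab) random variable. -/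
open MeasureTheory ProbabilityTheory

section aux
variable {Ω : Type*} [MeasurableSpace Ω] {μ : Measure Ω}

lemma aux_nat_choose_sum (n K : ℕ) :
    ∑ j ∈ Finset.range (K + 1), (n + j - 1).choose j = (n + K).choose K := by
  induction K with
  | zero => simp
  | succ K ih =>
    rw [Finset.sum_range_succ, ih, show n + (K + 1) - 1 = n + K by omega,
      show n + (K + 1) = (n + K) + 1 from rfl, Nat.choose_succ_succ]

lemma aux_tail (T : Ω → ℕ) (hT : Measurable T) (m : ℕ) :
    μ {ω | m ≤ T ω} = ∑' k : ℕ, μ {ω | T ω = m + k} := by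
  have hset : {ω | m ≤ T ω} = ⋃ k : ℕ, {ω | T ω = m + k} := by
    ext ω
    simp only [Set.mem_setOf_eq, Set.mem_iUnion]
    constructor
    · intro h; exact ⟨T ω - m, by omega⟩
    · rintro ⟨k, hk⟩; omega
  rw [hset, measure_iUnion]
  · intro i j hij
    simp only [Function.onFun, Set.disjoint_left, Set.mem_setOf_eq]
    intro ω h1 h2
    omega
  · exact fun k => hT (measurableSet_singleton _)

lemma aux_conv (U V : Ω → ℕ) (hU : Measurable U) (hV : Measurable V)
    (h : IndepFun U V μ) (K : ℕ) :
    μ {ω | U ω + V ω = K}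
      = ∑ j ∈ Finset.range (K + 1), μ {ω | U ω = j} * μ {ω | V ω = K - j} := by
  have hset : {ω | U ω + V ω = K}
      = ⋃ j ∈ Finset.range (K + 1), ({ω | U ω = j} ∩ {ω | V ω = K - j}) := by
    ext ω
    simp only [Set.mem_setOf_eq, Set.mem_iUnion, Set.mem_inter_iff, Finset.mem_range]
    constructor
    · intro hω; exact ⟨U ω, by omega, rfl, by omega⟩
    · rintro ⟨j, hj, h1, h2⟩; omega
  rw [hset, measure_biUnion_finset]
  · refine Finset.sum_congr rfl fun j hj => ?_
    exact h.measure_inter_preimage_eq_mul {j} {K - j}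
      (measurableSet_singleton _) (measurableSet_singleton _)
  · intro i hi j hj hij
    simp only [Function.onFun, Set.disjoint_left, Set.mem_inter_iff, Set.mem_setOf_eq]
    rintro ω ⟨h1, _⟩ ⟨h2, _⟩
    omega
  · exact fun j hj => (hU (measurableSet_singleton _)).inter (hV (measurableSet_singleton _))

lemma aux_hasSum (a b : ℝ) (ha0 : 0 < a) (ha1 : a ≤ 1) (hb0 : 0 < b) (hb1 : b ≤ 1)
    (K : ℕ) (hK : 1 ≤ K) : HasSum
      (fun n : ℕ => a * (1 - a) ^ n * (((n + K - 1).choose K : ℝ) * (b ^ n * (1 - b) ^ K)))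
      ((1 - a) * ((1 - b) / (1 - (1 - a) * b)) ^ K * (a * b / (1 - (1 - a) * b))) := by
  have ht0 : 0 ≤ (1 - a) * b := mul_nonneg (by linarith) hb0.le
  have ht1 : (1 - a) * b < 1 := by nlinarith
  have hc0 : 0 < 1 - (1 - a) * b := by linarith
  have h0 : HasSum (fun j : ℕ => ((j + K).choose K : ℝ) * ((1 - a) * b) ^ j)
      (1 / (1 - (1 - a) * b) ^ (K + 1)) :=
    hasSum_choose_mul_geometric_of_norm_lt_one K (by
      rw [Real.norm_eq_abs, abs_of_nonneg ht0]; exact ht1)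
  have h1 := h0.mul_left (a * (1 - b) ^ K * ((1 - a) * b))
  have heq : (fun j : ℕ => a * (1 - b) ^ K * ((1 - a) * b) *
        (((j + K).choose K : ℝ) * ((1 - a) * b) ^ j))
      = fun j : ℕ => a * (1 - a) ^ (j + 1) *
        ((((j + 1) + K - 1).choose K : ℝ) * (b ^ (j + 1) * (1 - b) ^ K)) := by
    funext j
    rw [show (j + 1) + K - 1 = j + K by omega]
    rw [pow_succ, pow_succ, mul_pow]
    ring
  rw [heq] at h1
  have h2 := (hasSum_nat_add_iff (f := fun n : ℕ => a * (1 - a) ^ n *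
      (((n + K - 1).choose K : ℝ) * (b ^ n * (1 - b) ^ K))) 1).mp h1
  have hz : ∑ i ∈ Finset.range 1, a * (1 - a) ^ i *
      (((i + K - 1).choose K : ℝ) * (b ^ i * (1 - b) ^ K)) = 0 := by
    have h00 : (K - 1).choose K = 0 := Nat.choose_eq_zero_of_lt (by omega)
    simp [h00]
  rw [hz, add_zero] at h2
  have hv : (1 - a) * ((1 - b) / (1 - (1 - a) * b)) ^ K * (a * b / (1 - (1 - a) * b))
      = a * (1 - b) ^ K * ((1 - a) * b) * (1 / (1 - (1 - a) * b) ^ (K + 1)) := by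
    rw [div_pow, pow_succ]
    field_simp
  rw [hv]
  exact h2

end aux

/-- Let `a, b ∈ (0,1]`.  Let `N ~ Geo(a)` and let `(X_i)` be i.i.d.
`Geo(b)` random variables, with `N` and the `X_i` all independent (here `Geo(s)` is the
geometric distribution on `ℕ` with `P(Geo(s) = k) = s(1-s)^k`).  Set
`S = X_1 + ⋯ + X_N` (with `S = 0` when `N = 0`).  Then for every integer `m ≥ 0`,
`P(S ≥ m) ≤ (1 - ab)^m`; that is, `S` is stochastically dominated by `Geo(ab)`. -/
theorem stmt7
    {Ω : Type*} [MeasurableSpace Ω] (μ : Measure Ω) [IsProbabilityMeasure μ]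
    (a b : ℝ) (ha0 : 0 < a) (ha1 : a ≤ 1) (hb0 : 0 < b) (hb1 : b ≤ 1)
    (N : Ω → ℕ) (X : ℕ → Ω → ℕ)
    (hNmeas : Measurable N) (hXmeas : ∀ i, Measurable (X i))
    (hindep : iIndepFun
      (fun i : Option ℕ => Option.elim i N X) μ)
    (hN : ∀ k : ℕ, μ {ω | N ω = k} = ENNReal.ofReal (a * (1 - a) ^ k))
    (hXgeo : ∀ i, ∀ k : ℕ, μ {ω | X i ω = k} = ENNReal.ofReal (b * (1 - b) ^ k))
    (m : ℕ) :
    μ {ω | m ≤ ∑ i ∈ Finset.range (N ω), X i ω}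
      ≤ ENNReal.ofReal ((1 - a * b) ^ m) := by
  rcases Nat.eq_zero_or_pos m with rfl | hm
  · simpa using prob_le_one
  -- basic numeric facts
  have hq0 : (0:ℝ) ≤ 1 - b := by linarith
  have ha' : (0:ℝ) ≤ 1 - a := by linarith
  have ht0 : 0 ≤ (1 - a) * b := mul_nonneg (by linarith) hb0.le
  have ht1 : (1 - a) * b < 1 := by nlinarith
  have hc0 : (0:ℝ) < 1 - (1 - a) * b := by linarith
  have hr0 : (0:ℝ) ≤ (1 - b) / (1 - (1 - a) * b) := div_nonneg hq0 hc0.le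
  have hr1 : (1 - b) / (1 - (1 - a) * b) < 1 := by
    rw [div_lt_one hc0]; nlinarith
  -- measurability
  have fmeas : ∀ i : Option ℕ, Measurable (Option.elim i N X) := by
    rintro (_ | i)
    · exact hNmeas
    · exact hXmeas _
  have msum : ∀ n : ℕ, Measurable (fun ω => ∑ i ∈ Finset.range n, X i ω) :=
    fun n => Finset.measurable_sum _ (fun i _ => hXmeas i)
  -- independence of partial sums from N and from the next summand
  have hsum_eq : ∀ n : ℕ,
      (∑ j ∈ (Finset.range n).map ⟨some, Option.some_injective ℕ⟩,
        (fun i : Option ℕ => Option.elim i N X) j)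
      = fun ω => ∑ i ∈ Finset.range n, X i ω := by
    intro n
    rw [Finset.sum_map]
    ext ω
    simp [Finset.sum_apply]
  have indepN : ∀ n : ℕ,
      IndepFun (fun ω => ∑ i ∈ Finset.range n, X i ω) N μ := by
    intro n
    have h := hindep.indepFun_finsetSum_of_notMem fmeas
      (s := (Finset.range n).map ⟨some, Option.some_injective ℕ⟩) (i := (none : Option ℕ))
      (by simp)
    rwa [hsum_eq] at h
  have indepX : ∀ n : ℕ,
      IndepFun (fun ω => ∑ i ∈ Finset.range n, X i ω) (X n) μ := by
    intro n
    have h := hindep.indepFun_finsetSum_of_notMem fmeas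
      (s := (Finset.range n).map ⟨some, Option.some_injective ℕ⟩) (i := (some n : Option ℕ))
      (by simp)
    rwa [hsum_eq] at h
  -- distribution of partial sums (negative binomial)
  have Pdist : ∀ n K : ℕ, μ {ω | (∑ i ∈ Finset.range n, X i ω) = K}
      = ENNReal.ofReal (((n + K - 1).choose K : ℝ) * (b ^ n * (1 - b) ^ K)) := by
    intro n
    induction n with
    | zero =>
      intro K
      cases K with
      | zero => simp
      | succ K =>
        have h1 : {ω : Ω | (∑ i ∈ Finset.range 0, X i ω) = K + 1} = ∅ := by
          ext ω; simp
        rw [h1]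
        have h2 : (0 + (K + 1) - 1).choose (K + 1) = 0 :=
          Nat.choose_eq_zero_of_lt (by omega)
        simp [h2]
    | succ n ih =>
      intro K
      have hrw : {ω : Ω | (∑ i ∈ Finset.range (n+1), X i ω) = K}
          = {ω | (∑ i ∈ Finset.range n, X i ω) + X n ω = K} := by
        ext ω; simp [Finset.sum_range_succ]
      rw [hrw, aux_conv _ _ (msum n) (hXmeas n) (indepX n) K]
      have hterm : ∀ j ∈ Finset.range (K + 1),
          μ {ω | (∑ i ∈ Finset.range n, X i ω) = j} * μ {ω | X n ω = K - j}
          = ENNReal.ofReal (((n + j - 1).choose j : ℝ) * (b ^ (n+1) * (1 - b) ^ K)) := by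
        intro j hj
        rw [ih j, hXgeo n (K - j), ← ENNReal.ofReal_mul (by positivity)]
        congr 1
        have hjK : j ≤ K := by simpa using Nat.lt_succ_iff.mp (Finset.mem_range.mp hj)
        have : (1 - b) ^ j * (1 - b) ^ (K - j) = (1 - b) ^ K := by
          rw [← pow_add]; congr 1; omega
        rw [← this, pow_succ]
        ring
      rw [Finset.sum_congr rfl hterm]
      rw [← ENNReal.ofReal_sum_of_nonneg (fun j hj => by positivity)]
      congr 1
      rw [← Finset.sum_mul, ← Nat.cast_sum, aux_nat_choose_sum n K,
        show n + 1 + K - 1 = n + K by omega]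
  -- decompose the event according to the value of N
  have hset : {ω | m ≤ ∑ i ∈ Finset.range (N ω), X i ω}
      = ⋃ n : ℕ, ({ω | N ω = n} ∩ {ω | m ≤ ∑ i ∈ Finset.range n, X i ω}) := by
    ext ω
    simp only [Set.mem_setOf_eq, Set.mem_iUnion, Set.mem_inter_iff]
    constructor
    · intro h; exact ⟨N ω, rfl, h⟩
    · rintro ⟨n, hn, h⟩; rw [hn]; exact h
  have hTmeas : ∀ n : ℕ, MeasurableSet {ω | m ≤ ∑ i ∈ Finset.range n, X i ω} :=
    fun n => msum n measurableSet_Ici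
  have hdecomp : μ {ω | m ≤ ∑ i ∈ Finset.range (N ω), X i ω}
      = ∑' n : ℕ, μ ({ω | N ω = n} ∩ {ω | m ≤ ∑ i ∈ Finset.range n, X i ω}) := by
    rw [hset, measure_iUnion]
    · intro i j hij
      simp only [Function.onFun, Set.disjoint_left, Set.mem_inter_iff, Set.mem_setOf_eq]
      rintro ω ⟨h1, _⟩ ⟨h2, _⟩
      omega
    · exact fun n => (hNmeas (measurableSet_singleton _)).inter (hTmeas n)
  have hindep_term : ∀ n : ℕ,
      μ ({ω | N ω = n} ∩ {ω | m ≤ ∑ i ∈ Finset.range n, X i ω})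
      = μ {ω | N ω = n} * μ {ω | m ≤ ∑ i ∈ Finset.range n, X i ω} :=
    fun n => (indepN n).symm.measure_inter_preimage_eq_mul {n} (Set.Ici m)
      (measurableSet_singleton _) measurableSet_Ici
  -- main computation
  calc μ {ω | m ≤ ∑ i ∈ Finset.range (N ω), X i ω}
      = ∑' n : ℕ, ∑' k : ℕ, μ {ω | N ω = n}
          * μ {ω | (∑ i ∈ Finset.range n, X i ω) = m + k} := by
        rw [hdecomp]
        refine tsum_congr fun n => ?_
        rw [hindep_term n, aux_tail _ (msum n) m, ENNReal.tsum_mul_left]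
    _ = ∑' k : ℕ, ∑' n : ℕ, μ {ω | N ω = n}
          * μ {ω | (∑ i ∈ Finset.range n, X i ω) = m + k} := ENNReal.tsum_comm
    _ = ∑' k : ℕ, ENNReal.ofReal ((1 - a) * ((1 - b) / (1 - (1 - a) * b)) ^ (m + k)
          * (a * b / (1 - (1 - a) * b))) := by
        refine tsum_congr fun k => ?_
        have hs := aux_hasSum a b ha0 ha1 hb0 hb1 (m + k) (by omega)
        have hterm : ∀ n : ℕ, μ {ω | N ω = n}
            * μ {ω | (∑ i ∈ Finset.range n, X i ω) = m + k}
            = ENNReal.ofReal (a * (1 - a) ^ n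
              * (((n + (m + k) - 1).choose (m + k) : ℝ) * (b ^ n * (1 - b) ^ (m + k)))) := by
          intro n
          rw [hN n, Pdist n (m + k),
            ← ENNReal.ofReal_mul (mul_nonneg ha0.le (pow_nonneg ha' n))]
        rw [tsum_congr hterm,
          ← ENNReal.ofReal_tsum_of_nonneg (fun n =>
            mul_nonneg (mul_nonneg ha0.le (pow_nonneg ha' n))
              (mul_nonneg (Nat.cast_nonneg _)
                (mul_nonneg (pow_nonneg hb0.le n) (pow_nonneg hq0 _)))) hs.summable,
          hs.tsum_eq]
    _ = ENNReal.ofReal ((1 - a) * ((1 - b) / (1 - (1 - a) * b)) ^ m) := by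
        have hgeo := (hasSum_geometric_of_lt_one hr0 hr1).mul_left
          ((1 - a) * ((1 - b) / (1 - (1 - a) * b)) ^ m * (a * b / (1 - (1 - a) * b)))
        have heq : (fun k : ℕ => (1 - a) * ((1 - b) / (1 - (1 - a) * b)) ^ m
              * (a * b / (1 - (1 - a) * b)) * ((1 - b) / (1 - (1 - a) * b)) ^ k)
            = fun k : ℕ => (1 - a) * ((1 - b) / (1 - (1 - a) * b)) ^ (m + k)
              * (a * b / (1 - (1 - a) * b)) := by
          funext k
          rw [pow_add]
          ring
        rw [heq] at hgeo
        rw [← ENNReal.ofReal_tsum_of_nonneg (fun k =>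
            mul_nonneg (mul_nonneg ha' (pow_nonneg hr0 _))
              (div_nonneg (mul_nonneg ha0.le hb0.le) hc0.le)) hgeo.summable,
          hgeo.tsum_eq]
        congr 1
        have h1r : 1 - (1 - b) / (1 - (1 - a) * b) = a * b / (1 - (1 - a) * b) := by
          rw [eq_div_iff hc0.ne', sub_mul, div_mul_cancel₀ _ hc0.ne']
          ring
        rw [h1r]
        have hab0 : (0:ℝ) < a * b / (1 - (1 - a) * b) := by positivity
        field_simp
  refine ENNReal.ofReal_le_ofReal ?_
  have hrle : (1 - b) / (1 - (1 - a) * b) ≤ 1 - a * b := by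
    rw [div_le_iff₀ hc0]
    nlinarith [mul_nonneg (mul_nonneg ha0.le (mul_self_nonneg b)) ha']
  have hpow := pow_le_pow_left₀ hr0 hrle m
  nlinarith [pow_nonneg hr0 m]
end

section
/- Define s(p) = (1−2p)·exp(−3(1−2p)²/(2(1+4p))) and, for q ∈ (0,1], define 𝔮(p,q) = s(p)·q / (1 − (1−s(p))·q²). Then for every fixed q ∈ (0,1], the function p ↦ 𝔮(p,q) is decreasing (antitone) on the interval [0.4950, 0.4975]. -/
noncomputable def sd (p : ℝ) : ℝ :=
  -2 * Real.exp (-(3 * (1 - 2 * p) ^ 2) / (2 * (1 + 4 * p))) +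
    (1 - 2 * p) * (Real.exp (-(3 * (1 - 2 * p) ^ 2) / (2 * (1 + 4 * p))) *
      ((12 * (1 - 2 * p) * (2 * (1 + 4 * p)) - -(3 * (1 - 2 * p) ^ 2) * 8) /
        (2 * (1 + 4 * p)) ^ 2))

lemma sd_hasDerivAt (p : ℝ) (hp : (0.4950:ℝ) ≤ p) :
    HasDerivAt (fun p => (1 - 2 * p) * Real.exp (-(3 * (1 - 2 * p) ^ 2) / (2 * (1 + 4 * p)))) (sd p) p := by
  have hv : (2 * (1 + 4 * p)) ≠ 0 := by norm_num at hp ⊢; nlinarith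
  have h1 : HasDerivAt (fun p : ℝ => 1 - 2 * p) (-2) p := by
    simpa using ((hasDerivAt_id p).const_mul (2:ℝ)).const_sub 1
  have h2 : HasDerivAt (fun p : ℝ => -(3 * (1 - 2 * p) ^ 2)) (-(3 * (2 * (1 - 2 * p) ^ 1 * -2))) p :=
    ((h1.pow 2).const_mul (3:ℝ)).neg
  have h3 : HasDerivAt (fun p : ℝ => 2 * (1 + 4 * p)) (2 * 4) p := by
    simpa using (((hasDerivAt_id p).const_mul (4:ℝ)).const_add 1).const_mul (2:ℝ)
  have h6 := h1.mul ((h2.div h3 hv).exp)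
  exact h6.congr_deriv (by unfold sd; simp only [Pi.div_apply]; ring)

lemma sd_nonpos (p : ℝ) (hp1 : (0.4950:ℝ) ≤ p) (hp2 : p ≤ (0.4975:ℝ)) : sd p ≤ 0 := by
  norm_num at hp1 hp2
  unfold sd
  set E := Real.exp (-(3 * (1 - 2 * p) ^ 2) / (2 * (1 + 4 * p))) with hE
  have hEpos : 0 < E := Real.exp_pos _
  have hvpos : (0:ℝ) < (2 * (1 + 4 * p)) ^ 2 := by positivity
  have key : (1 - 2 * p) * ((12 * (1 - 2 * p) * (2 * (1 + 4 * p)) - -(3 * (1 - 2 * p) ^ 2) * 8) /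
      (2 * (1 + 4 * p)) ^ 2) ≤ 2 := by
    rw [mul_div_assoc'] at *
    rw [div_le_iff₀ hvpos]
    nlinarith [sq_nonneg (1 - 2*p), sq_nonneg p]
  nlinarith [key, hEpos]

/-- With `s(p) = (1−2p)·exp(−3(1−2p)²/(2(1+4p)))` and
`𝔮(p,q) = s(p)·q / (1 − (1−s(p))·q²)`, for every fixed `q ∈ (0,1]` the function
`p ↦ 𝔮(p,q)` is decreasing (antitone) on `[0.4950, 0.4975]`. -/
theorem stmt9
    (s : ℝ → ℝ)
    (hs : ∀ p : ℝ, s p = (1 - 2 * p) * Real.exp (-(3 * (1 - 2 * p) ^ 2) / (2 * (1 + 4 * p))))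
    (Q : ℝ → ℝ → ℝ)
    (hQ : ∀ p q : ℝ, Q p q = s p * q / (1 - (1 - s p) * q ^ 2))
    (q : ℝ) (hq0 : 0 < q) (hq1 : q ≤ 1) :
    AntitoneOn (fun p => Q p q) (Set.Icc 0.4950 0.4975) := by
  have hse : s = fun p => (1 - 2 * p) * Real.exp (-(3 * (1 - 2 * p) ^ 2) / (2 * (1 + 4 * p))) :=
    funext hs
  -- bounds on s
  have hsb : ∀ p ∈ Set.Icc (0.4950:ℝ) 0.4975, 0 < s p ∧ s p < 1 := by
    intro p hp
    obtain ⟨h1, h2⟩ := hp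
    norm_num at h1 h2
    rw [hs]
    have hu : 0 < 1 - 2 * p := by linarith
    constructor
    · positivity
    · have hexp : Real.exp (-(3 * (1 - 2 * p) ^ 2) / (2 * (1 + 4 * p))) ≤ 1 := by
        rw [Real.exp_le_one_iff]
        apply div_nonpos_of_nonpos_of_nonneg
        · nlinarith [sq_nonneg (1 - 2*p)]
        · nlinarith
      nlinarith [Real.exp_pos (-(3 * (1 - 2 * p) ^ 2) / (2 * (1 + 4 * p)))]
  -- s antitone
  have hanti : AntitoneOn s (Set.Icc (0.4950:ℝ) 0.4975) := by
    rw [hse]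
    apply antitoneOn_of_deriv_nonpos (convex_Icc _ _)
    · intro x hx
      exact (sd_hasDerivAt x hx.1).continuousAt.continuousWithinAt
    · intro x hx
      rw [interior_Icc] at hx
      exact (sd_hasDerivAt x hx.1.le).differentiableAt.differentiableWithinAt
    · intro x hx
      rw [interior_Icc] at hx
      rw [(sd_hasDerivAt x hx.1.le).deriv]
      exact sd_nonpos x hx.1.le hx.2.le
  intro p1 hp1 p2 hp2 h12
  simp only
  rw [hQ, hQ]
  obtain ⟨hs1pos, hs1lt⟩ := hsb p1 hp1
  obtain ⟨hs2pos, hs2lt⟩ := hsb p2 hp2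
  have hsle : s p2 ≤ s p1 := hanti hp1 hp2 h12
  have hq2 : q ^ 2 ≤ 1 := by nlinarith
  have hd1 : 0 < 1 - (1 - s p1) * q ^ 2 := by nlinarith
  have hd2 : 0 < 1 - (1 - s p2) * q ^ 2 := by nlinarith
  rw [div_le_div_iff₀ hd2 hd1]
  nlinarith [mul_nonneg (mul_nonneg hq0.le (sub_nonneg.2 hq2)) (sub_nonneg.2 hsle)]
end

section
/- Define s(p) = (1−2p)·exp(−3(1−2p)²/(2(1+4p))) and 𝔮(p,q) = s(p)·q / (1 − (1−s(p))·q²). Then for p = 0.4975 and every q ∈ [0.9999998, 1], one has 𝔮(p,q) ≥ 0.9999. -/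
/-- With `s(p) = (1−2p)·exp(−3(1−2p)²/(2(1+4p)))` and
`𝔮(p,q) = s(p)·q / (1 − (1−s(p))·q²)`, for `p = 0.4975` and every
`q ∈ [0.9999998, 1]`, one has `𝔮(p,q) ≥ 0.9999`. -/
theorem stmt10
    (s : ℝ → ℝ)
    (hs : ∀ p : ℝ, s p = (1 - 2 * p) * Real.exp (-(3 * (1 - 2 * p) ^ 2) / (2 * (1 + 4 * p))))
    (Q : ℝ → ℝ → ℝ)
    (hQ : ∀ p q : ℝ, Q p q = s p * q / (1 - (1 - s p) * q ^ 2))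
    (q : ℝ) (hq0 : 0.9999998 ≤ q) (hq1 : q ≤ 1) :
    0.9999 ≤ Q 0.4975 q := by
  have hsv : s 0.4975 = 0.005 * Real.exp (-(0.000075 / 5.98)) := by
    rw [hs]; norm_num
  set E := Real.exp (-(0.000075 / 5.98)) with hE
  have hE1 : E ≤ 1 := Real.exp_le_one_iff.mpr (by norm_num)
  have hE0 : (0.9999874 : ℝ) ≤ E := by
    have := Real.add_one_le_exp (-(0.000075 / 5.98))
    linarith
  have hslo : (0.004999937 : ℝ) ≤ s 0.4975 := by rw [hsv]; nlinarith
  have hshi : s 0.4975 ≤ 0.005 := by rw [hsv]; nlinarith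
  have hq2 : q ^ 2 ≤ 1 := by nlinarith
  have hD : (0 : ℝ) < 1 - (1 - s 0.4975) * q ^ 2 := by nlinarith
  rw [hQ, le_div_iff₀ hD]
  nlinarith [sq_nonneg q, sq_nonneg (1 - q)]
end

section
/- For every ρ ∈ [0.98, 0.99] and every 𝔮 ∈ [0.9999, 1], one has 1 − ∏_{k=0}^{50} (1 − (ρ𝔮)^k · 𝔮 · (1−ρ)/2) ≥ 1/(ρ 𝔮³) − 1. -/
/-- For every `ρ ∈ [0.98, 0.99]` and every `𝔮 ∈ [0.9999, 1]`,
`1 − ∏_{k=0}^{50} (1 − (ρ𝔮)^k · 𝔮 · (1−ρ)/2) ≥ 1/(ρ𝔮³) − 1`. -/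
theorem stmt12
    (ρ q : ℝ) (hρ0 : 0.98 ≤ ρ) (hρ1 : ρ ≤ 0.99) (hq0 : 0.9999 ≤ q) (hq1 : q ≤ 1) :
    1 / (ρ * q ^ 3) - 1
      ≤ 1 - ∏ k ∈ Finset.range 51, (1 - (ρ * q) ^ k * q * ((1 - ρ) / 2)) := by
  have hρq : (0.9798 : ℝ) ≤ ρ * q := by nlinarith
  have hρq0 : (0 : ℝ) ≤ ρ * q := by linarith
  have hρq1 : ρ * q ≤ 1 := by nlinarith
  have hq0' : (0 : ℝ) ≤ q := by linarith
  -- each factor is at most 0.9982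
  have key : ∀ k ∈ Finset.range 51,
      (1 - (ρ * q) ^ k * q * ((1 - ρ) / 2)) ≤ (0.9982 : ℝ) := by
    intro k hk
    have hk' : k ≤ 50 := Nat.lt_succ_iff.mp (Finset.mem_range.mp hk)
    have h1 : (ρ * q) ^ 50 ≤ (ρ * q) ^ k := pow_le_pow_of_le_one hρq0 hρq1 hk'
    have h2 : (0.9798 : ℝ) ^ 50 ≤ (ρ * q) ^ 50 := pow_le_pow_left₀ (by norm_num) hρq 50
    have hx : (0.9798 : ℝ) ^ 50 ≤ (ρ * q) ^ k := h2.trans h1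
    have hz : (0.005 : ℝ) ≤ (1 - ρ) / 2 := by linarith
    have hstep : (0.9798 : ℝ) ^ 50 * 0.9999 * 0.005 ≤ (ρ * q) ^ k * q * ((1 - ρ) / 2) := by
      apply mul_le_mul _ hz (by norm_num)
      · positivity
      · exact mul_le_mul hx hq0 (by norm_num) (pow_nonneg hρq0 k)
    have hnum : (0.0018 : ℝ) ≤ (0.9798 : ℝ) ^ 50 * 0.9999 * 0.005 := by norm_num
    linarith
  -- each factor is nonnegative
  have keynn : ∀ k ∈ Finset.range 51,
      (0 : ℝ) ≤ 1 - (ρ * q) ^ k * q * ((1 - ρ) / 2) := by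
    intro k _
    have h1 : (ρ * q) ^ k ≤ 1 := pow_le_one₀ hρq0 hρq1
    have h2 : (ρ * q) ^ k * q * ((1 - ρ) / 2) ≤ 1 * 1 * 0.01 := by
      apply mul_le_mul _ (by linarith) (by linarith) (by norm_num)
      exact mul_le_mul h1 hq1 hq0' (by norm_num)
    linarith
  have hP : ∏ k ∈ Finset.range 51, (1 - (ρ * q) ^ k * q * ((1 - ρ) / 2))
      ≤ (0.9982 : ℝ) ^ 51 := by
    calc ∏ k ∈ Finset.range 51, (1 - (ρ * q) ^ k * q * ((1 - ρ) / 2))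
        ≤ ∏ _k ∈ Finset.range 51, (0.9982 : ℝ) :=
          Finset.prod_le_prod keynn key
      _ = (0.9982 : ℝ) ^ 51 := by
          rw [Finset.prod_const, Finset.card_range]
  -- left side bound
  have hd : (0.98 : ℝ) * 0.9999 ^ 3 ≤ ρ * q ^ 3 := by
    have h3 : (0.9999 : ℝ) ^ 3 ≤ q ^ 3 := pow_le_pow_left₀ (by norm_num) hq0 3
    nlinarith
  have hdpos : (0 : ℝ) < (0.98 : ℝ) * 0.9999 ^ 3 := by norm_num
  have hL : 1 / (ρ * q ^ 3) ≤ 1 / ((0.98 : ℝ) * 0.9999 ^ 3) :=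
    one_div_le_one_div_of_le hdpos hd
  have hnum2 : 1 / ((0.98 : ℝ) * 0.9999 ^ 3) - 1 ≤ 1 - (0.9982 : ℝ) ^ 51 := by norm_num
  linarith
end
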